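/- arXiv:2401.16198 — 4 statements merged into one kernel-verified Lean document; each statement's English description precedes it below -/
import Mathlib

section
/- Fix a linear contract instance and let R_⋆ := max_{1≤i≤n} (1 − α_{i−1,i})·R_i (with α_{0,1} := 0). Let π be any valid dynamic linear contract with α^k ≤ α_{n−1,n} for all k and total duration T := Σ_k τ^k. Then for every t ∈ (0, T]: (u_P^{(t)}(π) − R_⋆·t) + ψ(A^{(t)}/t)·t ≤ ∫_0^t ψ(A^{(s)}/s) ds, where A^{(t)} is the cumulative scalar contract up to time t and ψ is the potential function of the instance. (The excess of the cumulative principal utility over the static optimum, plus the time-weighted potential, is bounded by the integral of the raw potential.) -/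
open Finset

/-- Indifference point `α_{i,i+1}` between actions `i` and `i+1`. -/
noncomputable def indiff (c R : ℕ → ℝ) (i : ℕ) : ℝ :=
  (c (i + 1) - c i) / (R (i + 1) - R i)

/-- Breakpoint `α_{i,i+1}` with the convention `α_{0,1} := 0`. -/
noncomputable def bp (c R : ℕ → ℝ) (i : ℕ) : ℝ :=
  if i = 0 then 0 else indiff c R i

/-- A linear contract instance with `n ≥ 2` actions indexed `1,…,n`:
costs `0 = c_1 < … < c_n`, rewards `0 ≤ R_1 < … < R_n`, and indifference
points satisfying `0 < α_{1,2} < … < α_{n-1,n} ≤ 1`. -/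
def LinInstance (n : ℕ) (c R : ℕ → ℝ) : Prop :=
  2 ≤ n ∧ c 1 = 0 ∧ 0 ≤ R 1 ∧
    (∀ i, 1 ≤ i → i < n → c i < c (i + 1)) ∧
    (∀ i, 1 ≤ i → i < n → R i < R (i + 1)) ∧
    0 < indiff c R 1 ∧
    (∀ i, 1 ≤ i → i + 1 ≤ n - 1 → indiff c R i < indiff c R (i + 1)) ∧
    indiff c R (n - 1) ≤ 1

/-- Best-response set of the agent to the linear contract with scalar `x`. -/
def BR (n : ℕ) (c R : ℕ → ℝ) (x : ℝ) : Set ℕ :=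
  {i | i ∈ Finset.Icc 1 n ∧ ∀ j ∈ Finset.Icc 1 n, x * R j - c j ≤ x * R i - c i}

/-- A dynamic linear contract with `K` segments (indexed `1,…,K`):
scalars `α`, durations `τ`, and actions `a`. -/
structure DLC where
  K : ℕ
  α : ℕ → ℝ
  τ : ℕ → ℝ
  a : ℕ → ℕ

namespace DLC

/-- Total duration of the first `k` segments. -/
noncomputable def Tsum (π : DLC) (k : ℕ) : ℝ := ∑ j ∈ Finset.Icc 1 k, π.τ j

/-- Cumulative scalar contract of the first `k` segments. -/
noncomputable def Asum (π : DLC) (k : ℕ) : ℝ := ∑ j ∈ Finset.Icc 1 k, π.α j * π.τ j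

/-- Time-averaged contract `ᾱ^k` after the first `k` segments. -/
noncomputable def avg (π : DLC) (k : ℕ) : ℝ := π.Asum k / π.Tsum k

/-- Validity: positive durations, nonnegative scalars, actions in `{1,…,n}`,
and each action is a best response to the historical average contract at the
end of its segment, and (for `k ≥ 2`) also at its beginning. -/
def Valid (n : ℕ) (c R : ℕ → ℝ) (π : DLC) : Prop :=
  1 ≤ π.K ∧
    (∀ k ∈ Finset.Icc 1 π.K, 0 ≤ π.α k ∧ 0 < π.τ k ∧ π.a k ∈ Finset.Icc 1 n) ∧
    (∀ k ∈ Finset.Icc 1 π.K, π.a k ∈ BR n c R (π.avg k)) ∧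
    (∀ k, 2 ≤ k → k ≤ π.K → π.a k ∈ BR n c R (π.avg (k - 1)))

/-- Time-averaged principal utility. -/
noncomputable def Util (R : ℕ → ℝ) (π : DLC) : ℝ :=
  (∑ k ∈ Finset.Icc 1 π.K, π.τ k * (1 - π.α k) * R (π.a k)) / π.Tsum π.K

/-- Time-averaged agent utility. -/
noncomputable def UtilA (c R : ℕ → ℝ) (π : DLC) : ℝ :=
  (∑ k ∈ Finset.Icc 1 π.K, π.τ k * (π.α k * R (π.a k) - c (π.a k))) / π.Tsum π.K

/-- Free-fall: the zero contract is offered on every segment after the first. -/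
def FreeFall (π : DLC) : Prop := ∀ k, 2 ≤ k → k ≤ π.K → π.α k = 0

/-- Cumulative principal utility `u_P^{(t)}(π)` up to time `t`. -/
noncomputable def cumUtil (R : ℕ → ℝ) (π : DLC) (t : ℝ) : ℝ :=
  ∑ k ∈ Finset.Icc 1 π.K,
    (min t (π.Tsum k) - min t (π.Tsum (k - 1))) * (1 - π.α k) * R (π.a k)

/-- Cumulative scalar contract `A^{(t)}` up to time `t`. -/
noncomputable def cumA (π : DLC) (t : ℝ) : ℝ :=
  ∑ k ∈ Finset.Icc 1 π.K, (min t (π.Tsum k) - min t (π.Tsum (k - 1))) * π.α k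

end DLC

/-- The raw potential function `ψ`: piecewise linear with `ψ(0) = 0` and slope
`R_i` on the interval `[α_{i-1,i}, α_{i,i+1}]` for `1 ≤ i ≤ n − 1`. -/
noncomputable def potential (n : ℕ) (c R : ℕ → ℝ) (x : ℝ) : ℝ :=
  ∑ i ∈ Finset.Icc 1 (n - 1), R i * (min x (bp c R i) - min x (bp c R (i - 1)))

section Aux

variable {n : ℕ} {c R : ℕ → ℝ}

lemma lin_bp_zero (c R : ℕ → ℝ) : bp c R 0 = 0 := if_pos rfl

lemma lin_bp_step (h : LinInstance n c R) {j : ℕ} (hj : j + 1 ≤ n - 1) :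
    bp c R j < bp c R (j + 1) := by
  rcases Nat.eq_zero_or_pos j with rfl | hj1
  · show bp c R 0 < bp c R 1
    rw [lin_bp_zero, bp, if_neg one_ne_zero]
    exact h.2.2.2.2.2.1
  · rw [bp, bp, if_neg (by omega), if_neg (by omega)]
    exact h.2.2.2.2.2.2.1 j hj1 hj

lemma lin_bp_mono (h : LinInstance n c R) : ∀ {i j : ℕ}, i ≤ j → j ≤ n - 1 →
    bp c R i ≤ bp c R j := by
  intro i j hij hj
  induction j with
  | zero =>
    obtain rfl : i = 0 := by omega
    exact le_rfl
  | succ j ih =>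
    rcases eq_or_lt_of_le hij with rfl | hlt
    · exact le_rfl
    · exact le_trans (ih (by omega) (by omega)) (lin_bp_step h hj).le

lemma lin_bp_nonneg (h : LinInstance n c R) {i : ℕ} (hi : i ≤ n - 1) :
    0 ≤ bp c R i := by
  have := lin_bp_mono h (Nat.zero_le i) hi
  rwa [lin_bp_zero] at this

lemma lin_R_mono (h : LinInstance n c R) : ∀ {i j : ℕ}, 1 ≤ i → i ≤ j → j ≤ n →
    R i ≤ R j := by
  intro i j hi hij hj
  induction j with
  | zero => omega
  | succ j ih =>
    rcases eq_or_lt_of_le hij with rfl | hlt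
    · exact le_rfl
    · have h1 : R i ≤ R j := ih (by omega) (by omega)
      have h2 : R j < R (j + 1) := h.2.2.2.2.1 j (by omega) (by omega)
      linarith

lemma lin_R_nonneg (h : LinInstance n c R) {i : ℕ} (h1 : 1 ≤ i) (h2 : i ≤ n) :
    0 ≤ R i :=
  le_trans h.2.2.1 (lin_R_mono h le_rfl h1 h2)

lemma BR_lower (h : LinInstance n c R) {a : ℕ} {x : ℝ} (ha : a ∈ BR n c R x)
    (ha2 : 2 ≤ a) : bp c R (a - 1) ≤ x := by
  obtain ⟨hmem, hbr⟩ := ha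
  simp only [Finset.mem_Icc] at hmem
  have h2 := hbr (a - 1) (by simp only [Finset.mem_Icc]; omega)
  have e : a - 1 + 1 = a := by omega
  have hR : R (a - 1) < R a := by
    have := h.2.2.2.2.1 (a - 1) (by omega) (by omega)
    rwa [e] at this
  rw [bp, if_neg (by omega), indiff, e, div_le_iff₀ (by linarith), mul_sub]
  linarith

lemma BR_upper (h : LinInstance n c R) {a : ℕ} {x : ℝ} (ha : a ∈ BR n c R x)
    (ha1 : 1 ≤ a) (han : a ≤ n - 1) : x ≤ bp c R a := by
  obtain ⟨hmem, hbr⟩ := ha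
  simp only [Finset.mem_Icc] at hmem
  have hn2 : 2 ≤ n := h.1
  have h2 := hbr (a + 1) (by simp only [Finset.mem_Icc]; omega)
  have hR : R a < R (a + 1) := h.2.2.2.2.1 a ha1 (by omega)
  rw [bp, if_neg (by omega), indiff, le_div_iff₀ (by linarith), mul_sub]
  linarith

lemma pot_diff (h : LinInstance n c R) {m : ℕ} (hm1 : 1 ≤ m) (hm2 : m ≤ n - 1)
    {x y : ℝ} (hy : bp c R (m - 1) ≤ y) (hxy : y ≤ x) (hx : x ≤ bp c R m) :
    potential n c R x = potential n c R y + R m * (x - y) := by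
  have key : ∀ j, j ≤ n - 1 → min x (bp c R j) - min y (bp c R j)
      = if m ≤ j then x - y else 0 := by
    intro j hj
    rcases le_or_gt m j with hmj | hmj
    · have hbj : x ≤ bp c R j := le_trans hx (lin_bp_mono h hmj hj)
      rw [min_eq_left hbj, min_eq_left (le_trans hxy hbj), if_pos hmj]
    · have hbj : bp c R j ≤ y :=
        le_trans (lin_bp_mono h (by omega : j ≤ m - 1) (by omega)) hy
      rw [min_eq_right (le_trans hbj hxy), min_eq_right hbj, if_neg (not_le.mpr hmj)]
      exact sub_self _
  have hterm : ∀ i ∈ Finset.Icc 1 (n - 1),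
      R i * (min x (bp c R i) - min x (bp c R (i - 1)))
        - R i * (min y (bp c R i) - min y (bp c R (i - 1)))
      = if i = m then R m * (x - y) else 0 := by
    intro i hi
    simp only [Finset.mem_Icc] at hi
    have e1 := key i hi.2
    have e2 := key (i - 1) (by omega)
    rcases lt_trichotomy i m with hlt | rfl | hgt
    · rw [if_neg (by omega)]
      rw [if_neg (by omega)] at e1
      rw [if_neg (by omega)] at e2
      linear_combination R i * e1 - R i * e2
    · rw [if_pos rfl]
      rw [if_pos le_rfl] at e1
      rw [if_neg (by omega)] at e2
      linear_combination R i * e1 - R i * e2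
    · rw [if_neg (by omega)]
      rw [if_pos (by omega)] at e1
      rw [if_pos (by omega)] at e2
      linear_combination R i * e1 - R i * e2
  have hsum : potential n c R x - potential n c R y = R m * (x - y) := by
    rw [potential, potential, ← Finset.sum_sub_distrib,
      Finset.sum_congr rfl hterm, Finset.sum_ite_eq' _ m (fun _ => R m * (x - y)),
      if_pos (by simp only [Finset.mem_Icc]; omega)]
  linarith

end Aux
section Aux2

variable {n : ℕ} {c R : ℕ → ℝ}

lemma Tsum_zero (π : DLC) : π.Tsum 0 = 0 := by
  rw [DLC.Tsum, Finset.Icc_eq_empty (by omega), Finset.sum_empty]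

lemma Tsum_succ (π : DLC) (k : ℕ) : π.Tsum (k + 1) = π.Tsum k + π.τ (k + 1) :=
  Finset.sum_Icc_succ_top (by omega) _

lemma Asum_zero (π : DLC) : π.Asum 0 = 0 := by
  rw [DLC.Asum, Finset.Icc_eq_empty (by omega), Finset.sum_empty]

lemma Asum_succ (π : DLC) (k : ℕ) :
    π.Asum (k + 1) = π.Asum k + π.α (k + 1) * π.τ (k + 1) :=
  Finset.sum_Icc_succ_top (by omega) _

variable {π : DLC} (hτ : ∀ j ∈ Finset.Icc 1 π.K, 0 < π.τ j)
include hτ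

lemma Tsum_mono : ∀ {i j : ℕ}, i ≤ j → j ≤ π.K → π.Tsum i ≤ π.Tsum j := by
  intro i j hij hj
  induction j with
  | zero =>
    obtain rfl : i = 0 := by omega
    exact le_rfl
  | succ j ih =>
    rcases eq_or_lt_of_le hij with rfl | hlt
    · exact le_rfl
    · have h1 : π.Tsum i ≤ π.Tsum j := ih (by omega) (by omega)
      have h2 : 0 < π.τ (j + 1) := hτ (j + 1) (by simp only [Finset.mem_Icc]; omega)
      rw [Tsum_succ]
      linarith

lemma Tsum_nonneg {k : ℕ} (hk : k ≤ π.K) : 0 ≤ π.Tsum k := by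
  have := Tsum_mono hτ (Nat.zero_le k) hk
  rwa [Tsum_zero] at this

lemma Tsum_pos {k : ℕ} (h1 : 1 ≤ k) (hk : k ≤ π.K) : 0 < π.Tsum k := by
  have e1 : π.Tsum 1 = π.τ 1 := by
    rw [DLC.Tsum, Finset.Icc_self, Finset.sum_singleton]
  have h2 : 0 < π.τ 1 := hτ 1 (by simp only [Finset.mem_Icc]; omega)
  have := Tsum_mono hτ h1 hk
  rw [e1] at this
  linarith

lemma cumA_zero : π.cumA 0 = 0 := by
  rw [DLC.cumA]
  apply Finset.sum_eq_zero
  intro j hj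
  simp only [Finset.mem_Icc] at hj
  have h1 : min (0:ℝ) (π.Tsum j) = 0 := min_eq_left (Tsum_nonneg hτ hj.2)
  have h2 : min (0:ℝ) (π.Tsum (j - 1)) = 0 := min_eq_left (Tsum_nonneg hτ (by omega))
  rw [h1, h2, sub_self, zero_mul]

lemma cumA_seg {k : ℕ} (hk : k < π.K) {s : ℝ} (hs1 : π.Tsum k ≤ s)
    (hs2 : s ≤ π.Tsum (k + 1)) :
    π.cumA s = π.Asum k + (s - π.Tsum k) * π.α (k + 1) := by
  have e0 : ∀ m : ℕ, Finset.Icc 1 m = Finset.Ioc 0 m := fun m => Finset.Icc_add_one_left_eq_Ioc 0 m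
  rw [DLC.cumA, e0, ← Finset.sum_Ioc_consecutive _ (Nat.zero_le k) (le_of_lt hk),
    ← Finset.sum_Ioc_consecutive _ (Nat.le_succ k) hk,
    Nat.Ioc_succ_singleton, Finset.sum_singleton]
  have hP1 : ∑ j ∈ Finset.Ioc 0 k,
      (min s (π.Tsum j) - min s (π.Tsum (j - 1))) * π.α j = π.Asum k := by
    rw [DLC.Asum, e0]
    apply Finset.sum_congr rfl
    intro j hj
    simp only [Finset.mem_Ioc] at hj
    have hTj : min s (π.Tsum j) = π.Tsum j :=
      min_eq_right (le_trans (Tsum_mono hτ hj.2 (by omega)) hs1)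
    have hTj' : min s (π.Tsum (j - 1)) = π.Tsum (j - 1) :=
      min_eq_right (le_trans (Tsum_mono hτ (by omega) (by omega)) hs1)
    have hstep : π.Tsum j = π.Tsum (j - 1) + π.τ j := by
      have := Tsum_succ π (j - 1)
      have e : j - 1 + 1 = j := by omega
      rwa [e] at this
    rw [hTj, hTj', hstep]
    ring
  have hP2 : min s (π.Tsum (k + 1)) - min s (π.Tsum (k + 1 - 1)) = s - π.Tsum k := by
    have e : k + 1 - 1 = k := by omega
    rw [e, min_eq_left hs2, min_eq_right hs1]
  have hP3 : ∑ j ∈ Finset.Ioc (k + 1) π.K,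
      (min s (π.Tsum j) - min s (π.Tsum (j - 1))) * π.α j = 0 := by
    apply Finset.sum_eq_zero
    intro j hj
    simp only [Finset.mem_Ioc] at hj
    have h1 : min s (π.Tsum j) = s :=
      min_eq_left (le_trans hs2 (Tsum_mono hτ (by omega) hj.2))
    have h2 : min s (π.Tsum (j - 1)) = s :=
      min_eq_left (le_trans hs2 (Tsum_mono hτ (by omega) (by omega)))
    rw [h1, h2, sub_self, zero_mul]
  rw [hP1, hP2, hP3]
  ring

lemma avg_mem {B : ℝ} (hα : ∀ j ∈ Finset.Icc 1 π.K, 0 ≤ π.α j)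
    (hcap : ∀ j ∈ Finset.Icc 1 π.K, π.α j ≤ B)
    {k : ℕ} (h1 : 1 ≤ k) (hk : k ≤ π.K) : 0 ≤ π.avg k ∧ π.avg k ≤ B := by
  have hsub : Finset.Icc 1 k ⊆ Finset.Icc 1 π.K := Finset.Icc_subset_Icc_right hk
  have hT : 0 < π.Tsum k := Tsum_pos hτ h1 hk
  have hA0 : 0 ≤ π.Asum k :=
    Finset.sum_nonneg fun j hj => mul_nonneg (hα j (hsub hj)) (hτ j (hsub hj)).le
  have hAB : π.Asum k ≤ B * π.Tsum k := by
    rw [DLC.Tsum, Finset.mul_sum]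
    exact Finset.sum_le_sum fun j hj =>
      mul_le_mul_of_nonneg_right (hcap j (hsub hj)) (hτ j (hsub hj)).le
  exact ⟨div_nonneg hA0 hT.le, (div_le_iff₀ hT).mpr (by linarith)⟩

end Aux2
section Aux3

variable {n : ℕ} {c R : ℕ → ℝ}

lemma Rstar_ge {Rstar : ℝ}
    (hRstar : IsGreatest ((fun i => (1 - bp c R (i - 1)) * R i) '' Set.Icc 1 n) Rstar)
    {i : ℕ} (h1 : 1 ≤ i) (h2 : i ≤ n) : (1 - bp c R (i - 1)) * R i ≤ Rstar :=
  hRstar.2 (Set.mem_image_of_mem _ (Set.mem_Icc.mpr ⟨h1, h2⟩))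

lemma mem_interval_of_BR (h : LinInstance n c R) {a : ℕ} {x : ℝ}
    (ha : a ∈ BR n c R x) (hx0 : 0 ≤ x) (hxB : x ≤ bp c R (n - 1)) :
    (bp c R (min a (n - 1) - 1) ≤ x ∧ x ≤ bp c R (min a (n - 1)))
      ∧ (n ≤ a → x = bp c R (n - 1)) := by
  have hmem := ha.1
  simp only [Finset.mem_Icc] at hmem
  have hn2 : 2 ≤ n := h.1
  rcases le_or_gt a (n - 1) with hle | hgt
  · have hm : min a (n - 1) = a := min_eq_left hle
    refine ⟨⟨?_, ?_⟩, fun hna => by omega⟩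
    · rw [hm]
      rcases Nat.lt_or_ge a 2 with h1 | h2
      · obtain rfl : a = 1 := by omega
        simpa [lin_bp_zero] using hx0
      · exact BR_lower h ha h2
    · rw [hm]
      exact BR_upper h ha hmem.1 hle
  · have han : a = n := by omega
    have hx : bp c R (n - 1) ≤ x := by
      have := BR_lower h ha (by omega)
      rwa [han] at this
    have hxe : x = bp c R (n - 1) := le_antisymm hxB hx
    have hm : min a (n - 1) = n - 1 := min_eq_right (by omega)
    refine ⟨⟨?_, ?_⟩, fun _ => hxe⟩
    · rw [hm, hxe]
      exact lin_bp_mono h (by omega) (by omega)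
    · rw [hm, hxe]

lemma key_ineq (h : LinInstance n c R) {Rstar : ℝ}
    (hRstar : IsGreatest ((fun i => (1 - bp c R (i - 1)) * R i) '' Set.Icc 1 n) Rstar)
    {a : ℕ} (ha1 : 1 ≤ a) (han : a ≤ n) {β al : ℝ}
    (hβ1 : bp c R (min a (n - 1) - 1) ≤ β)
    (hn : n ≤ a → β = bp c R (n - 1) ∧ al = bp c R (n - 1)) :
    R (min a (n - 1)) * al + (1 - al) * R a - Rstar ≤ R (min a (n - 1)) * β := by
  have hn2 : 2 ≤ n := h.1
  rcases le_or_gt a (n - 1) with hle | hgt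
  · have hm : min a (n - 1) = a := min_eq_left hle
    rw [hm] at hβ1 ⊢
    have h1 : (1 - bp c R (a - 1)) * R a ≤ Rstar := Rstar_ge hRstar ha1 han
    have h2 : 0 ≤ R a := lin_R_nonneg h ha1 han
    have h3 : R a * bp c R (a - 1) ≤ R a * β := mul_le_mul_of_nonneg_left hβ1 h2
    nlinarith [h1, h3]
  · have hm : min a (n - 1) = n - 1 := min_eq_right (by omega)
    obtain ⟨hβe, hale⟩ := hn (by omega)
    have han' : a = n := by omega
    have h1 : (1 - bp c R (n - 1)) * R n ≤ Rstar := Rstar_ge hRstar (by omega) le_rfl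
    rw [hm, hβe, hale, han']
    linarith

lemma seg_beta (h : LinInstance n c R) (π : DLC) (hπ : π.Valid n c R)
    (hcap : ∀ j ∈ Finset.Icc 1 π.K, π.α j ≤ bp c R (n - 1))
    {k : ℕ} (hk : k < π.K) {s : ℝ} (hs1 : π.Tsum k ≤ s) (hs2 : s ≤ π.Tsum (k + 1))
    (hs0 : 0 < s) :
    (bp c R (min (π.a (k + 1)) (n - 1) - 1) ≤ π.cumA s / s
        ∧ π.cumA s / s ≤ bp c R (min (π.a (k + 1)) (n - 1)))
      ∧ (n ≤ π.a (k + 1) → π.cumA s / s = bp c R (n - 1)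
        ∧ π.α (k + 1) = bp c R (n - 1)) := by
  obtain ⟨hK, hbasic, hbr1, hbr2⟩ := hπ
  have hτ : ∀ j ∈ Finset.Icc 1 π.K, 0 < π.τ j := fun j hj => (hbasic j hj).2.1
  have hα : ∀ j ∈ Finset.Icc 1 π.K, 0 ≤ π.α j := fun j hj => (hbasic j hj).1
  have hk1 : k + 1 ∈ Finset.Icc 1 π.K := by simp only [Finset.mem_Icc]; omega
  have hbrA := hbr1 (k + 1) hk1
  have havg1 := avg_mem hτ hα hcap (by omega : 1 ≤ k + 1) (by omega : k + 1 ≤ π.K)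
  have hI1 := mem_interval_of_BR h hbrA havg1.1 havg1.2
  have hAeq := cumA_seg hτ hk hs1 hs2
  have hτ1 : 0 < π.τ (k + 1) := hτ (k + 1) hk1
  rcases Nat.eq_zero_or_pos k with rfl | hkpos
  · -- first segment
    have hβ : π.cumA s / s = π.α 1 := by
      rw [hAeq, Asum_zero, Tsum_zero]
      field_simp
      ring
    have havgeq : π.avg 1 = π.α 1 := by
      have h1 : π.Asum 1 = π.α 1 * π.τ 1 := by
        rw [DLC.Asum, Finset.Icc_self, Finset.sum_singleton]
      have h2 : π.Tsum 1 = π.τ 1 := by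
        rw [DLC.Tsum, Finset.Icc_self, Finset.sum_singleton]
      rw [DLC.avg, h1, h2]
      field_simp
    have e01 : (0 : ℕ) + 1 = 1 := rfl
    rw [e01] at hI1 ⊢
    rw [hβ, ← havgeq]
    exact ⟨hI1.1, fun hna => ⟨hI1.2 hna, hI1.2 hna⟩⟩
  · -- later segments
    have hkK : 1 ≤ k := hkpos
    have hbrB := hbr2 (k + 1) (by omega) (by omega)
    simp only [Nat.add_sub_cancel] at hbrB
    have havg0 := avg_mem hτ hα hcap hkK (by omega : k ≤ π.K)
    have hI0 := mem_interval_of_BR h hbrB havg0.1 havg0.2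
    have hupos : 0 < π.Tsum k := Tsum_pos hτ hkK (by omega)
    have hTne : π.Tsum k ≠ 0 := ne_of_gt hupos
    set u := π.Tsum k with hu
    set al := π.α (k + 1) with halv
    set τ' := π.τ (k + 1) with hτ'v
    set g0 := π.avg k with hg0v
    set g1 := π.avg (k + 1) with hg1v
    have hT' : π.Tsum (k + 1) = u + τ' := Tsum_succ π k
    have hA' : π.Asum (k + 1) = π.Asum k + al * τ' := Asum_succ π k
    have hT'pos : 0 < π.Tsum (k + 1) := by rw [hT']; linarith
    have hAu : π.Asum k = g0 * u := by
      rw [hg0v, hu, DLC.avg]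
      exact (div_mul_cancel₀ _ hTne).symm
    have hg1e : g1 * (u + τ') = g0 * u + τ' * al := by
      rw [hg1v, DLC.avg, hA', hAu, ← hT']
      field_simp
    clear_value u al τ' g0 g1
    have hT'pos' : (0:ℝ) < u + τ' := by linarith
    have hβ : π.cumA s / s = (g0 * u + (s - u) * al) / s := by rw [hAeq, hAu]
    have hg1d : g1 = (g0 * u + τ' * al) / (u + τ') := by
      rw [eq_div_iff (ne_of_gt hT'pos')]
      exact hg1e
    have e1 : (π.cumA s / s - g0) * s = (s - u) * (al - g0) := by
      rw [hβ]
      field_simp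
      ring
    have e2 : (g1 - π.cumA s / s) * (s * (u + τ')) = u * ((u + τ') - s) * (al - g0) := by
      rw [hβ, hg1d]
      field_simp
      ring
    have hs2' : s ≤ u + τ' := by rw [← hT']; exact hs2
    have hsu : 0 ≤ s - u := by linarith
    have hbounds : (g0 ≤ π.cumA s / s ∧ π.cumA s / s ≤ g1)
        ∨ (g1 ≤ π.cumA s / s ∧ π.cumA s / s ≤ g0) := by
      have hsT := mul_pos hs0 hT'pos'
      rcases le_total g0 al with hc | hc
      · left
        constructor
        · have h1 : 0 ≤ (π.cumA s / s - g0) * s := by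
            rw [e1]; exact mul_nonneg hsu (by linarith)
          have := (mul_nonneg_iff_of_pos_right hs0).mp h1
          linarith
        · have h1 : 0 ≤ (g1 - π.cumA s / s) * (s * (u + τ')) := by
            rw [e2]
            exact mul_nonneg (mul_nonneg hupos.le (by linarith)) (by linarith)
          have := (mul_nonneg_iff_of_pos_right hsT).mp h1
          linarith
      · right
        constructor
        · have h1 : 0 ≤ (π.cumA s / s - g1) * (s * (u + τ')) := by
            have : (π.cumA s / s - g1) * (s * (u + τ'))
                = u * ((u + τ') - s) * (g0 - al) := by linear_combination -e2
            rw [this]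
            exact mul_nonneg (mul_nonneg hupos.le (by linarith)) (by linarith)
          have := (mul_nonneg_iff_of_pos_right hsT).mp h1
          linarith
        · have h1 : 0 ≤ (g0 - π.cumA s / s) * s := by
            have : (g0 - π.cumA s / s) * s = (s - u) * (g0 - al) := by linear_combination -e1
            rw [this]
            exact mul_nonneg hsu (by linarith)
          have := (mul_nonneg_iff_of_pos_right hs0).mp h1
          linarith
    constructor
    · rcases hbounds with ⟨hb1, hb2⟩ | ⟨hb1, hb2⟩
      · exact ⟨le_trans hI0.1.1 hb1, le_trans hb2 hI1.1.2⟩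
      · exact ⟨le_trans hI1.1.1 hb1, le_trans hb2 hI0.1.2⟩
    · intro hna
      have hg0B := hI0.2 hna
      have hg1B := hI1.2 hna
      have hβB : π.cumA s / s = bp c R (n - 1) := by
        rcases hbounds with ⟨hb1, hb2⟩ | ⟨hb1, hb2⟩
        · rw [hg0B] at hb1; rw [hg1B] at hb2; linarith
        · rw [hg1B] at hb1; rw [hg0B] at hb2; linarith
      refine ⟨hβB, ?_⟩
      have hta : τ' * al = τ' * bp c R (n - 1) := by
        rw [hg0B, hg1B] at hg1e
        linear_combination -hg1e
      exact mul_left_cancel₀ (ne_of_gt hτ1) hta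
  
end Aux3
section Aux4

variable {n : ℕ} {c R : ℕ → ℝ}

lemma pot_abs_le (n : ℕ) (c R : ℕ → ℝ) (x : ℝ) :
    |potential n c R x|
      ≤ ∑ i ∈ Finset.Icc 1 (n - 1), |R i| * |bp c R i - bp c R (i - 1)| := by
  refine (Finset.abs_sum_le_sum_abs _ _).trans (Finset.sum_le_sum fun i _ => ?_)
  rw [abs_mul]
  refine mul_le_mul_of_nonneg_left ?_ (abs_nonneg _)
  calc |min x (bp c R i) - min x (bp c R (i - 1))|
      ≤ max |x - x| |bp c R i - bp c R (i - 1)| := abs_min_sub_min_le_max _ _ _ _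
    _ = |bp c R i - bp c R (i - 1)| := by
        rw [sub_self, abs_zero, max_eq_right (abs_nonneg _)]

lemma pot_integrable (n : ℕ) (c R : ℕ → ℝ) (π : DLC) (a b : ℝ) :
    IntervalIntegrable (fun s => potential n c R (π.cumA s / s))
      MeasureTheory.volume a b := by
  have hpotc : Continuous (fun x : ℝ => potential n c R x) := by
    unfold potential
    exact continuous_finset_sum _ fun i _ =>
      continuous_const.mul ((continuous_id.min continuous_const).sub
        (continuous_id.min continuous_const))
  have hcumA : Continuous (fun s : ℝ => π.cumA s) := by
    unfold DLC.cumA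
    exact continuous_finset_sum _ fun i _ =>
      (((continuous_id.min continuous_const).sub
        (continuous_id.min continuous_const)).mul continuous_const)
  have hmeas : Measurable fun s : ℝ => potential n c R (π.cumA s / s) :=
    hpotc.measurable.comp (hcumA.measurable.div measurable_id)
  refine IntervalIntegrable.mono_fun' (g := fun _ =>
      ∑ i ∈ Finset.Icc 1 (n - 1), |R i| * |bp c R i - bp c R (i - 1)|)
    intervalIntegrable_const hmeas.aestronglyMeasurable ?_
  refine Filter.Eventually.of_forall fun s => ?_
  simpa [Real.norm_eq_abs] using pot_abs_le n c R (π.cumA s / s)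

end Aux4

/-- Potential inequality: for any valid dynamic linear contract
with scalars capped at `α_{n-1,n}`, the excess of cumulative principal utility
over the static optimum plus the time-weighted potential is bounded by the
integral of the raw potential. -/
theorem potential_inequality (n : ℕ) (c R : ℕ → ℝ) (hInst : LinInstance n c R)
    (Rstar : ℝ)
    (hRstar : IsGreatest ((fun i => (1 - bp c R (i - 1)) * R i) '' Set.Icc 1 n) Rstar)
    (π : DLC) (hπ : π.Valid n c R)
    (hcap : ∀ k ∈ Finset.Icc 1 π.K, π.α k ≤ bp c R (n - 1))
    (t : ℝ) (ht0 : 0 < t) (htT : t ≤ π.Tsum π.K) :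
    (π.cumUtil R t - Rstar * t) + potential n c R (π.cumA t / t) * t ≤
      ∫ s in (0 : ℝ)..t, potential n c R (π.cumA s / s) := by
  classical
  have hn2 : 2 ≤ n := hInst.1
  obtain ⟨hK, hbasic, hbr1, hbr2⟩ := id hπ
  have hτ : ∀ j ∈ Finset.Icc 1 π.K, 0 < π.τ j := fun j hj => (hbasic j hj).2.1
  set f : ℝ → ℝ := fun s => potential n c R (π.cumA s / s) with hf
  set F : ℕ → ℝ := fun k => min t (π.Tsum k) with hF
  have hF0 : F 0 = 0 := by
    rw [hF]
    simp only [Tsum_zero]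
    exact min_eq_right ht0.le
  have hFK : F π.K = t := min_eq_left htT
  have hFmono : ∀ k, k < π.K → F k ≤ F (k + 1) := fun k hk =>
    min_le_min le_rfl (Tsum_mono hτ (Nat.le_succ k) hk)
  have hint : ∀ a b : ℝ, IntervalIntegrable f MeasureTheory.volume a b :=
    fun a b => pot_integrable n c R π a b
  -- per-segment inequality
  have hstar : ∀ k, k < π.K →
      (F (k + 1) * f (F (k + 1)) - F k * f (F k))
        + (F (k + 1) - F k) * ((1 - π.α (k + 1)) * R (π.a (k + 1)) - Rstar)
      ≤ ∫ s in F k..F (k + 1), f s := by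
    intro k hk
    by_cases hEq : F (k + 1) = F k
    · rw [hEq, intervalIntegral.integral_same]
      ring_nf
      exact le_rfl
    · have hk1 : k + 1 ∈ Finset.Icc 1 π.K := by simp only [Finset.mem_Icc]; omega
      have huv : F k < F (k + 1) := lt_of_le_of_ne (hFmono k hk) (Ne.symm hEq)
      have hvt : F (k + 1) ≤ t := min_le_left _ _
      have hut : F k < t := lt_of_lt_of_le huv hvt
      have hu : F k = π.Tsum k := by
        rcases le_total t (π.Tsum k) with hh | hh
        · exfalso
          have he : F k = t := min_eq_left hh
          rw [he] at hut
          exact lt_irrefl _ hut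
        · exact min_eq_right hh
      have hvT : F (k + 1) ≤ π.Tsum (k + 1) := min_le_right _ _
      have hu0 : 0 ≤ F k := by
        rw [hu]
        exact Tsum_nonneg hτ (by omega)
      have hv0 : 0 < F (k + 1) := lt_of_le_of_lt hu0 huv
      have ha_mem : π.a (k + 1) ∈ Finset.Icc 1 n := (hbasic (k + 1) hk1).2.2
      have ha1 : 1 ≤ π.a (k + 1) := (Finset.mem_Icc.mp ha_mem).1
      have han : π.a (k + 1) ≤ n := (Finset.mem_Icc.mp ha_mem).2
      have hm1 : 1 ≤ min (π.a (k + 1)) (n - 1) := le_min ha1 (by omega)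
      have hm2 : min (π.a (k + 1)) (n - 1) ≤ n - 1 := min_le_right _ _
      -- segment facts
      have hseg : ∀ s : ℝ, F k ≤ s → s ≤ F (k + 1) → 0 < s →
          (bp c R (min (π.a (k + 1)) (n - 1) - 1) ≤ π.cumA s / s
              ∧ π.cumA s / s ≤ bp c R (min (π.a (k + 1)) (n - 1)))
            ∧ (n ≤ π.a (k + 1) → π.cumA s / s = bp c R (n - 1)
              ∧ π.α (k + 1) = bp c R (n - 1)) := by
        intro s h1 h2 h3
        exact seg_beta hInst π hπ hcap hk (hu ▸ h1) (le_trans h2 hvT) h3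
      have hv_seg := hseg (F (k + 1)) huv.le le_rfl hv0
      set m := min (π.a (k + 1)) (n - 1) with hm
      set D := f (F (k + 1)) - R m * (π.cumA (F (k + 1)) / F (k + 1)) with hD
      -- affine formula
      have haff : ∀ s : ℝ, F k ≤ s → s ≤ F (k + 1) → 0 < s →
          f s = R m * (π.cumA s / s) + D := by
        intro s h1 h2 h3
        have hsseg := (hseg s h1 h2 h3).1
        rw [hD]
        rcases le_total (π.cumA s / s) (π.cumA (F (k + 1)) / F (k + 1)) with hc | hc
        · have h4 := pot_diff hInst hm1 hm2 hsseg.1 hc hv_seg.1.2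
          simp only [hf]
          linarith
        · have h4 := pot_diff hInst hm1 hm2 hv_seg.1.1 hc hsseg.2
          simp only [hf]
          linarith
      -- pointwise lower bound
      have hpt : ∀ s ∈ Set.Ioc (F k) (F (k + 1)),
          R m * π.α (k + 1) + D + (1 - π.α (k + 1)) * R (π.a (k + 1)) - Rstar ≤ f s := by
        intro s hs
        have hs0 : 0 < s := lt_of_le_of_lt hu0 hs.1
        have hsseg := hseg s hs.1.le hs.2 hs0
        rw [haff s hs.1.le hs.2 hs0]
        have hki := key_ineq hInst hRstar ha1 han hsseg.1.1 hsseg.2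
        linarith
      -- integral lower bound
      have hIb : (F (k + 1) - F k) * (R m * π.α (k + 1) + D
          + (1 - π.α (k + 1)) * R (π.a (k + 1)) - Rstar) ≤ ∫ s in F k..F (k + 1), f s := by
        have hae : (fun _ : ℝ => R m * π.α (k + 1) + D
            + (1 - π.α (k + 1)) * R (π.a (k + 1)) - Rstar)
            ≤ᵐ[MeasureTheory.volume.restrict (Set.Icc (F k) (F (k + 1)))] f := by
          refine (MeasureTheory.ae_restrict_iff' measurableSet_Icc).mpr ?_
          have hne : ∀ᵐ (s : ℝ) ∂MeasureTheory.volume, s ≠ F k := by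
            rw [MeasureTheory.ae_iff]
            have : {s : ℝ | ¬s ≠ F k} = {F k} := by
              ext s; simp
            rw [this]
            exact Real.volume_singleton
          filter_upwards [hne] with s hs hmem
          exact hpt s ⟨lt_of_le_of_ne hmem.1 (Ne.symm hs), hmem.2⟩
        have := intervalIntegral.integral_mono_ae_restrict huv.le
          (intervalIntegrable_const) (hint (F k) (F (k + 1))) hae
        rwa [intervalIntegral.integral_const, smul_eq_mul] at this
      -- cumA values
      have hAv : π.cumA (F (k + 1)) = π.Asum k + (F (k + 1) - F k) * π.α (k + 1) := by
        rw [hu]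
        exact cumA_seg hτ hk (by rw [← hu]; exact huv.le) hvT
      have hAu : π.cumA (F k) = π.Asum k := by
        have := cumA_seg hτ hk (le_of_eq hu.symm) (by rw [hu]; exact Tsum_mono hτ (Nat.le_succ k) hk)
        rw [this, hu]
        ring
      -- endpoint identities
      have hvfv : F (k + 1) * f (F (k + 1)) = R m * π.cumA (F (k + 1)) + D * F (k + 1) := by
        have h1 : f (F (k + 1)) = R m * (π.cumA (F (k + 1)) / F (k + 1)) + D := by
          rw [hD]; ring
        rw [h1]
        field_simp
      have hufu : F k * f (F k) = R m * π.cumA (F k) + D * F k := by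
        rcases eq_or_lt_of_le hu0 with h0 | h0
        · have hAk0 : π.Asum k = 0 := by
            have h00 : π.Tsum k = 0 := by rw [← hu, ← h0]
            have hk0 : k = 0 := by
              by_contra hne
              have hp := Tsum_pos hτ (by omega : 1 ≤ k) (by omega)
              rw [h00] at hp
              exact lt_irrefl _ hp
            rw [hk0]
            exact Asum_zero π
          rw [hAu, hAk0, ← h0]
          ring
        · rw [haff (F k) le_rfl huv.le h0]
          field_simp
      -- combine
      calc (F (k + 1) * f (F (k + 1)) - F k * f (F k))
            + (F (k + 1) - F k) * ((1 - π.α (k + 1)) * R (π.a (k + 1)) - Rstar)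
          = (F (k + 1) - F k) * (R m * π.α (k + 1) + D
              + (1 - π.α (k + 1)) * R (π.a (k + 1)) - Rstar) := by
            linear_combination hvfv - hufu + R m * hAv - R m * hAu
        _ ≤ ∫ s in F k..F (k + 1), f s := hIb
  -- assemble
  have hsum := intervalIntegral.sum_integral_adjacent_intervals
    (μ := MeasureTheory.volume) (a := F) (n := π.K) (fun k _ => hint (F k) (F (k + 1)))
  rw [hF0, hFK] at hsum
  have hUtil : π.cumUtil R t = ∑ k ∈ Finset.range π.K,
      (F (k + 1) - F k) * ((1 - π.α (k + 1)) * R (π.a (k + 1))) := by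
    rw [DLC.cumUtil, ← Finset.Ico_add_one_right_eq_Icc, Finset.sum_Ico_eq_sum_range]
    refine Finset.sum_congr rfl fun k _ => ?_
    have e1 : 1 + k = k + 1 := by omega
    rw [e1]
    simp only [Nat.add_sub_cancel, hF]
    ring
  have htel : ∑ k ∈ Finset.range π.K, (F (k + 1) - F k) = t := by
    rw [Finset.sum_range_sub F, hF0, hFK, sub_zero]
  have hteleg : ∑ k ∈ Finset.range π.K, (F (k + 1) * f (F (k + 1)) - F k * f (F k))
      = t * f t := by
    rw [Finset.sum_range_sub (fun k => F k * f (F k)), hF0, hFK, zero_mul, sub_zero]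
  have hLHS : (π.cumUtil R t - Rstar * t) + potential n c R (π.cumA t / t) * t
      = ∑ k ∈ Finset.range π.K, ((F (k + 1) * f (F (k + 1)) - F k * f (F k))
        + (F (k + 1) - F k) * ((1 - π.α (k + 1)) * R (π.a (k + 1)) - Rstar)) := by
    rw [Finset.sum_add_distrib, hteleg]
    have hsplit : ∑ k ∈ Finset.range π.K,
        (F (k + 1) - F k) * ((1 - π.α (k + 1)) * R (π.a (k + 1)) - Rstar)
        = (∑ k ∈ Finset.range π.K, (F (k + 1) - F k) * ((1 - π.α (k + 1)) * R (π.a (k + 1))))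
          - (∑ k ∈ Finset.range π.K, (F (k + 1) - F k)) * Rstar := by
      rw [Finset.sum_mul, ← Finset.sum_sub_distrib]
      exact Finset.sum_congr rfl fun k _ => by ring
    rw [hsplit, ← hUtil, htel]
    simp only [hf]
    ring
  rw [hLHS, ← hsum]
  exact Finset.sum_le_sum fun k hk => hstar k (Finset.mem_range.mp hk)
end

section
/- For every valid dynamic linear contract π (possibly containing scalars α^k > 1) there exists a valid dynamic linear contract π′ = ((α′^k, τ′^k, a′^k))_{k=1}^{K′} with Util(π′) ≥ Util(π) and α′^k ≤ 1 for all k. (The principal never benefits from offering linear contracts with scalar exceeding 1, even dynamically.) -/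
open Finset

namespace NoB

variable {n : ℕ} {c R : ℕ → ℝ}

lemma indiff_mono (hI : LinInstance n c R) {i j : ℕ} (h1 : 1 ≤ i) (hij : i ≤ j)
    (hj : j ≤ n - 1) : indiff c R i ≤ indiff c R j := by
  obtain ⟨-, -, -, -, -, -, him, -⟩ := hI
  induction j, hij using Nat.le_induction with
  | base => exact le_rfl
  | succ j hij ih =>
      have hj' : j ≤ n - 1 := by omega
      exact le_trans (ih hj') (le_of_lt (him j (by omega) (by omega)))

lemma indiff_strict (hI : LinInstance n c R) {i j : ℕ} (h1 : 1 ≤ i) (hij : i < j)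
    (hj : j ≤ n - 1) : indiff c R i < indiff c R j := by
  obtain ⟨-, -, -, -, -, -, him, -⟩ := hI
  have : ∀ k, i + 1 ≤ k → k ≤ n - 1 → indiff c R i < indiff c R k := by
    intro k hk
    induction k, hk using Nat.le_induction with
    | base => intro h; exact him i h1 h
    | succ k hk ih =>
        intro h
        exact lt_trans (ih (by omega)) (him k (by omega) (by omega))
  exact this j hij hj

lemma bp_zero : bp c R 0 = 0 := by simp [bp]

lemma indiff_one_pos (hI : LinInstance n c R) : 0 < indiff c R 1 := hI.2.2.2.2.2.1

lemma bp_lt (hI : LinInstance n c R) {i j : ℕ} (hij : i < j) (hj : j ≤ n - 1) :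
    bp c R i < bp c R j := by
  have hj1 : 1 ≤ j := by omega
  have hbj : bp c R j = indiff c R j := by simp [bp]; omega
  rcases Nat.eq_zero_or_pos i with h0 | h1
  · subst h0
    rw [bp_zero, hbj]
    calc (0:ℝ) < indiff c R 1 := indiff_one_pos hI
    _ ≤ indiff c R j := indiff_mono hI le_rfl hj1 hj
  · have hbi : bp c R i = indiff c R i := by simp [bp]; omega
    rw [hbi, hbj]
    exact indiff_strict hI h1 hij hj

lemma bp_mono (hI : LinInstance n c R) {i j : ℕ} (hij : i ≤ j) (hj : j ≤ n - 1) :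
    bp c R i ≤ bp c R j := by
  rcases eq_or_lt_of_le hij with rfl | h
  · exact le_rfl
  · exact le_of_lt (bp_lt hI h hj)

lemma bp_nonneg (hI : LinInstance n c R) {i : ℕ} (hi : i ≤ n - 1) : 0 ≤ bp c R i := by
  have := bp_mono hI (Nat.zero_le i) hi
  rwa [bp_zero] at this

lemma bp_pos (hI : LinInstance n c R) {i : ℕ} (h1 : 1 ≤ i) (hi : i ≤ n - 1) :
    0 < bp c R i := by
  have := bp_lt hI (show 0 < i from h1) hi
  rwa [bp_zero] at this

lemma bp_le_one (hI : LinInstance n c R) {i : ℕ} (hi : i ≤ n - 1) : bp c R i ≤ 1 := by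
  have h2 : 2 ≤ n := hI.1
  have hlast : bp c R (n-1) ≤ 1 := by
    have : bp c R (n-1) = indiff c R (n-1) := by simp [bp]; omega
    rw [this]; exact hI.2.2.2.2.2.2.2
  exact le_trans (bp_mono hI hi (by omega)) hlast

lemma R_le (hI : LinInstance n c R) {i j : ℕ} (h1 : 1 ≤ i) (hij : i ≤ j) (hj : j ≤ n) :
    R i ≤ R j := by
  obtain ⟨-, -, -, -, hR, -⟩ := hI
  induction j, hij using Nat.le_induction with
  | base => exact le_rfl
  | succ j hij ih =>
      exact le_trans (ih (by omega)) (le_of_lt (hR j (by omega) (by omega)))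

lemma R_nonneg (hI : LinInstance n c R) {i : ℕ} (h1 : 1 ≤ i) (hi : i ≤ n) : 0 ≤ R i :=
  le_trans hI.2.2.1 (R_le hI le_rfl h1 hi)

lemma Rstep_pos (hI : LinInstance n c R) {t : ℕ} (h1 : 1 ≤ t) (ht : t < n) :
    0 < R (t+1) - R t := sub_pos.mpr (hI.2.2.2.2.1 t h1 ht)

lemma cstep (hI : LinInstance n c R) {t : ℕ} (h1 : 1 ≤ t) (ht : t < n) :
    c (t+1) - c t = bp c R t * (R (t+1) - R t) := by
  have hb : bp c R t = indiff c R t := by simp [bp]; omega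
  rw [hb, indiff, div_mul_cancel₀]
  exact ne_of_gt (Rstep_pos hI h1 ht)

lemma fdiff (hI : LinInstance n c R) {t : ℕ} (h1 : 1 ≤ t) (ht : t < n) (x : ℝ) :
    x * R (t+1) - c (t+1) = (x * R t - c t) + (R (t+1) - R t) * (x - bp c R t) := by
  have := cstep hI h1 ht
  nlinarith [this]

lemma mem_BR (hI : LinInstance n c R) {i : ℕ} {x : ℝ} (h1 : 1 ≤ i) (h2 : i ≤ n)
    (hl : bp c R (i-1) ≤ x) (hu : i < n → x ≤ bp c R i) : i ∈ BR n c R x := by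
  constructor
  · simp [Finset.mem_Icc]; omega
  · -- upward chain : for i ≤ q ≤ n, f q ≤ f i
    have up : ∀ q, i ≤ q → q ≤ n → x * R q - c q ≤ x * R i - c i := by
      intro q hq
      induction q, hq using Nat.le_induction with
      | base => exact fun _ => le_rfl
      | succ q hq ih =>
          intro hqn
          have hq' : q ≤ n := by omega
          have hkey := fdiff hI (by omega : 1 ≤ q) (by omega : q < n) x
          have hxq : x ≤ bp c R q := by
            have hin : i < n := by omega
            exact le_trans (hu hin) (bp_mono hI (by omega) (by omega))
          have hterm : (R (q+1) - R q) * (x - bp c R q) ≤ 0 :=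
            mul_nonpos_of_nonneg_of_nonpos (le_of_lt (Rstep_pos hI (by omega) (by omega)))
              (by linarith)
          calc x * R (q+1) - c (q+1) = (x * R q - c q) + (R (q+1) - R q) * (x - bp c R q) := hkey
          _ ≤ x * R q - c q := by linarith
          _ ≤ x * R i - c i := ih hq'
    have down : ∀ q r, 1 ≤ q → q ≤ r → r ≤ i → x * R q - c q ≤ x * R r - c r := by
      intro q r hq1 hqr
      induction r, hqr using Nat.le_induction with
      | base => exact fun _ => le_rfl
      | succ r hqr ih =>
          intro hri
          have hkey := fdiff hI (by omega : 1 ≤ r) (by omega : r < n) x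
          have hxr : bp c R r ≤ x := le_trans (bp_mono hI (by omega) (by omega)) hl
          have hterm : 0 ≤ (R (r+1) - R r) * (x - bp c R r) :=
            mul_nonneg (le_of_lt (Rstep_pos hI (by omega) (by omega))) (by linarith)
          calc x * R q - c q ≤ x * R r - c r := ih (by omega)
          _ ≤ x * R (r+1) - c (r+1) := by rw [hkey]; linarith
    intro j hj
    rw [Finset.mem_Icc] at hj
    rcases le_or_gt j i with h | h
    · exact down j i hj.1 h le_rfl
    · exact up j (le_of_lt h) hj.2

lemma BR_upper (hI : LinInstance n c R) {i : ℕ} {x : ℝ} (hBR : i ∈ BR n c R x)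
    (h1 : 1 ≤ i) (hin : i < n) : x ≤ bp c R i := by
  obtain ⟨-, hmax⟩ := hBR
  have := hmax (i+1) (by simp [Finset.mem_Icc]; omega)
  have hkey := fdiff hI h1 hin x
  have hR := Rstep_pos hI h1 hin
  nlinarith [hkey, this, hR]

lemma BR_lower (hI : LinInstance n c R) {i : ℕ} {x : ℝ} (hBR : i ∈ BR n c R x)
    (h2 : 2 ≤ i) (hin : i ≤ n) : bp c R (i-1) ≤ x := by
  obtain ⟨-, hmax⟩ := hBR
  have hmem : i - 1 ∈ Finset.Icc 1 n := by simp [Finset.mem_Icc]; omega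
  have hle := hmax (i-1) hmem
  have hi1 : i - 1 + 1 = i := by omega
  have hkey := fdiff hI (by omega : 1 ≤ i - 1) (by omega : i - 1 < n) x
  rw [hi1] at hkey
  have hR : 0 < R i - R (i-1) := by
    have := Rstep_pos hI (by omega : 1 ≤ i - 1) (by omega : i - 1 < n)
    rwa [hi1] at this
  nlinarith [hkey, hle, hR]

end NoB
namespace NoB

/-- Descent-gain coefficient: value-rate factor of the free-fall descent from
interval `a` down through interval `m` (stopping at `bp (m-1)`). -/
noncomputable def Gam (c R : ℕ → ℝ) (m a : ℕ) : ℝ :=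
  R m / bp c R (m-1) + ∑ l ∈ Finset.Icc (m+1) a, (R l - R (l-1)) / bp c R (l-1)

/-- Utility of the climb-then-free-fall contract: climb to `bp (a-1)` with
action `a`, then fall through actions `a-1, …, m`, stopping at `bp (m-1)`. -/
noncomputable def vff (c R : ℕ → ℝ) (a m : ℕ) : ℝ :=
  bp c R (m-1) * (Gam c R m a - R a)

/-- All candidate optimal values. -/
noncomputable def cand (n : ℕ) (c R : ℕ → ℝ) : Finset ℝ :=
  insert (R 1)
    (((Finset.Icc 1 n ×ˢ Finset.Icc 2 n).filter fun p => p.2 ≤ p.1).image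
      fun p => vff c R p.1 p.2)

noncomputable def Vstar (n : ℕ) (c R : ℕ → ℝ) : ℝ :=
  (cand n c R).max' ⟨R 1, Finset.mem_insert_self _ _⟩

lemma R1_le_Vstar : R 1 ≤ Vstar n c R :=
  Finset.le_max' _ _ (Finset.mem_insert_self _ _)

lemma vff_le_Vstar {a m : ℕ} (ha1 : 1 ≤ a) (han : a ≤ n) (hm2 : 2 ≤ m) (hma : m ≤ a) :
    vff c R a m ≤ Vstar n c R := by
  apply Finset.le_max'
  apply Finset.mem_insert_of_mem
  apply Finset.mem_image.mpr
  refine ⟨(a, m), ?_, rfl⟩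
  simp [Finset.mem_filter, Finset.mem_product, Finset.mem_Icc]
  omega

lemma Gam_self {a : ℕ} : Gam c R a a = R a / bp c R (a-1) := by
  rw [Gam, Finset.Icc_eq_empty (by omega), Finset.sum_empty, add_zero]

lemma Gam_succ {m a : ℕ} (hma : m ≤ a) :
    Gam c R m (a+1) = Gam c R m a + (R (a+1) - R a) / bp c R a := by
  rw [Gam, Gam, Finset.sum_Icc_succ_top (by omega : m + 1 ≤ a + 1)]
  have : (a + 1) - 1 = a := by omega
  rw [this]; ring

lemma Gam_step {m a : ℕ} (hma : m + 1 ≤ a) :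
    Gam c R m a = Gam c R (m+1) a + R m / bp c R (m-1) - R m / bp c R m := by
  have hsplit : Finset.Icc (m+1) a = insert (m+1) (Finset.Icc (m+2) a) := by
    ext x; simp [Finset.mem_Icc, Finset.mem_insert]; omega
  rw [Gam, Gam, hsplit, Finset.sum_insert (by simp [Finset.mem_Icc])]
  have h1 : (m + 1) - 1 = m := by omega
  have h2 : (m + 2) = (m + 1) + 1 := by omega
  rw [h1, h2]; ring

/-- Steady-state value: `vff a a = (1 - bp (a-1)) * R a`. -/
lemma vff_self (hI : LinInstance n c R) {a : ℕ} (h2 : 2 ≤ a) (han : a ≤ n) :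
    vff c R a a = (1 - bp c R (a-1)) * R a := by
  have hb : 0 < bp c R (a-1) := bp_pos hI (by omega) (by omega)
  rw [vff, Gam_self]
  field_simp

end NoB
namespace NoB

/-- Transfer of the descent-potential inequalities when the action changes
at a segment boundary (the average must then sit exactly at a breakpoint). -/
lemma switch (hI : LinInstance n c R) {V N T A : ℝ} {a a' : ℕ}
    (ha1 : 1 ≤ a) (han : a ≤ n) (ha'1 : 1 ≤ a') (ha'n : a' ≤ n)
    (hT : 0 < T)
    (haL : 2 ≤ a → bp c R (a-1) * T ≤ A) (haU : a < n → A ≤ bp c R a * T)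
    (haL' : 2 ≤ a' → bp c R (a'-1) * T ≤ A) (haU' : a' < n → A ≤ bp c R a' * T)
    (hrho : N ≤ V * T)
    (hm : ∀ m, 2 ≤ m → m ≤ a →
      bp c R (m-1) * (N - (T - A) * R a) + vff c R a m * A ≤ V * A) :
    ∀ m, 2 ≤ m → m ≤ a' →
      bp c R (m-1) * (N - (T - A) * R a') + vff c R a' m * A ≤ V * A := by
  have htri : a' = a ∨ a' = a + 1 ∨ a = a' + 1 := by
    by_contra hcon
    push_neg at hcon
    have hcase : a' + 2 ≤ a ∨ a + 2 ≤ a' := by omega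
    rcases hcase with h | h
    · have h1 := haL (by omega)
      have h2 := haU' (by omega)
      have h3 : bp c R a' < bp c R (a-1) := bp_lt hI (by omega) (by omega)
      nlinarith
    · have h1 := haL' (by omega)
      have h2 := haU (by omega)
      have h3 : bp c R a < bp c R (a'-1) := bp_lt hI (by omega) (by omega)
      nlinarith
  rcases htri with rfl | h1 | h1
  · exact hm
  · -- a' = a + 1 : climb switch; here A = bp a * T
    subst h1
    have hbpos : 0 < bp c R a := bp_pos hI (by omega) (by omega)
    have hAeq : A = bp c R a * T := by
      have hu := haU (by omega)
      have hl := haL' (by omega)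
      simp only [Nat.add_sub_cancel] at hl
      linarith
    intro m hm2 hma'
    rcases Nat.lt_or_ge m (a+1) with hlt | hge
    · have hmle : m ≤ a := by omega
      have hgs := Gam_succ (c := c) (R := R) (m := m) (a := a) hmle
      have heq : bp c R (m-1) * (N - (T - A) * R (a+1)) + vff c R (a+1) m * A
          = bp c R (m-1) * (N - (T - A) * R a) + vff c R a m * A := by
        simp only [vff]
        rw [hgs, hAeq]
        field_simp
        ring
      rw [heq]
      exact hm m hm2 hmle
    · have hmeq : m = a + 1 := by omega
      subst hmeq
      have h1 : (a + 1) - 1 = a := by omega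
      have heq : bp c R ((a+1)-1) * (N - (T - A) * R (a+1)) + vff c R (a+1) (a+1) * A
          = bp c R a * N := by
        simp only [vff, Gam_self, h1]
        rw [hAeq]
        field_simp
        ring
      rw [heq, hAeq]
      calc bp c R a * N ≤ bp c R a * (V * T) := mul_le_mul_of_nonneg_left hrho hbpos.le
      _ = V * (bp c R a * T) := by ring
  · -- a = a' + 1 : descent switch; here A = bp a' * T
    subst h1
    have hbpos : 0 < bp c R a' := bp_pos hI (by omega) (by omega)
    have hAeq : A = bp c R a' * T := by
      have hu := haU' (by omega)
      have hl := haL (by omega)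
      simp only [Nat.add_sub_cancel] at hl
      linarith
    intro m hm2 hma'
    have hgs := Gam_succ (c := c) (R := R) (m := m) (a := a') hma'
    have heq : bp c R (m-1) * (N - (T - A) * R a') + vff c R a' m * A
        = bp c R (m-1) * (N - (T - A) * R (a'+1)) + vff c R (a'+1) m * A := by
      simp only [vff]
      rw [hgs, hAeq]
      field_simp
      ring
    rw [heq]
    exact hm m hm2 (by omega)

/-- Evolution of the invariant along one segment with action `a'`. -/
lemma segstep (hI : LinInstance n c R) {V N T A τ α : ℝ} {a' : ℕ}
    (ha'1 : 1 ≤ a') (ha'n : a' ≤ n)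
    (hτ : 0 < τ) (hα : 0 ≤ α) (hT : 0 < T) (hA : 0 ≤ A)
    (hVR1 : R 1 ≤ V)
    (hL' : 2 ≤ a' → bp c R (a'-1) * (T + τ) ≤ A + α * τ)
    (hvle : ∀ m, 2 ≤ m → m ≤ a' → vff c R a' m ≤ V)
    (hrho : N ≤ V * T)
    (hm : ∀ m, 2 ≤ m → m ≤ a' →
      bp c R (m-1) * (N - (T - A) * R a') + vff c R a' m * A ≤ V * A) :
    N + τ * (1 - α) * R a' ≤ V * (T + τ) ∧
      ∀ m, 2 ≤ m → m ≤ a' →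
        bp c R (m-1) * ((N + τ * (1 - α) * R a') - ((T + τ) - (A + α * τ)) * R a')
          + vff c R a' m * (A + α * τ) ≤ V * (A + α * τ) := by
  have hRa : 0 ≤ R a' := R_nonneg hI ha'1 ha'n
  have hR1nn : 0 ≤ R 1 := hI.2.2.1
  have hmnew : ∀ m, 2 ≤ m → m ≤ a' →
      bp c R (m-1) * ((N + τ * (1 - α) * R a') - ((T + τ) - (A + α * τ)) * R a')
        + vff c R a' m * (A + α * τ) ≤ V * (A + α * τ) := by
    intro m hm2 hma
    have hstep : bp c R (m-1) * ((N + τ * (1 - α) * R a') - ((T + τ) - (A + α * τ)) * R a')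
          + vff c R a' m * (A + α * τ)
        = (bp c R (m-1) * (N - (T - A) * R a') + vff c R a' m * A)
          + vff c R a' m * (α * τ) := by ring
    rw [hstep]
    have h1 := hm m hm2 hma
    have h2 : vff c R a' m * (α * τ) ≤ V * (α * τ) :=
      mul_le_mul_of_nonneg_right (hvle m hm2 hma) (mul_nonneg hα hτ.le)
    calc (bp c R (m-1) * (N - (T - A) * R a') + vff c R a' m * A) + vff c R a' m * (α * τ)
        ≤ V * A + V * (α * τ) := by linarith
    _ = V * (A + α * τ) := by ring
  refine ⟨?_, hmnew⟩
  rcases le_or_gt (R a') V with hRV | hRV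
  · nlinarith [mul_nonneg (mul_nonneg hτ.le hα) hRa, mul_le_mul_of_nonneg_left hRV hτ.le]
  · have ha2 : 2 ≤ a' := by
      by_contra hcon
      have h1 : a' = 1 := by omega
      rw [h1] at hRV
      linarith
    have hβ : 0 < bp c R (a'-1) := bp_pos hI (by omega) (by omega)
    have hmm := hmnew a' ha2 le_rfl
    rw [vff_self hI ha2 ha'n] at hmm
    have hAT := hL' ha2
    have h1 : bp c R (a'-1) * ((N + τ * (1 - α) * R a') - (T + τ) * R a')
        ≤ (V - R a') * (A + α * τ) := by nlinarith [hmm]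
    have h2 : (V - R a') * (A + α * τ) ≤ (V - R a') * (bp c R (a'-1) * (T + τ)) :=
      mul_le_mul_of_nonpos_left hAT (by linarith)
    have h4 : (N + τ * (1 - α) * R a') - (T + τ) * R a' ≤ (V - R a') * (T + τ) := by
      have h3 : bp c R (a'-1) * ((N + τ * (1 - α) * R a') - (T + τ) * R a')
          ≤ bp c R (a'-1) * ((V - R a') * (T + τ)) := by nlinarith [h1, h2]
      exact (mul_le_mul_iff_of_pos_left hβ).mp h3
    linarith

end NoB
namespace NoB

noncomputable def Nsum (R : ℕ → ℝ) (π : DLC) (k : ℕ) : ℝ :=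
  ∑ j ∈ Finset.Icc 1 k, π.τ j * (1 - π.α j) * R (π.a j)

lemma util_bound (hI : LinInstance n c R) (π : DLC) (hv : π.Valid n c R) :
    ∀ k, 1 ≤ k → k ≤ π.K →
      (Nsum R π k ≤ Vstar n c R * π.Tsum k ∧
       ∀ m, 2 ≤ m → m ≤ π.a k →
         bp c R (m-1) * (Nsum R π k - (π.Tsum k - π.Asum k) * R (π.a k))
           + vff c R (π.a k) m * π.Asum k ≤ Vstar n c R * π.Asum k) := by
  obtain ⟨hK1, hseg, hBRend, hBRstart⟩ := hv
  have hτ : ∀ k, 1 ≤ k → k ≤ π.K → 0 < π.τ k := fun k h1 h2 =>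
    (hseg k (by simp [Finset.mem_Icc]; omega)).2.1
  have hα : ∀ k, 1 ≤ k → k ≤ π.K → 0 ≤ π.α k := fun k h1 h2 =>
    (hseg k (by simp [Finset.mem_Icc]; omega)).1
  have haA : ∀ k, 1 ≤ k → k ≤ π.K → 1 ≤ π.a k ∧ π.a k ≤ n := by
    intro k h1 h2
    have := (hseg k (by simp [Finset.mem_Icc]; omega)).2.2
    simpa [Finset.mem_Icc] using this
  have hTstep : ∀ k : ℕ, π.Tsum (k+1) = π.Tsum k + π.τ (k+1) := fun k =>
    Finset.sum_Icc_succ_top (by omega) _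
  have hAstep : ∀ k : ℕ, π.Asum (k+1) = π.Asum k + π.α (k+1) * π.τ (k+1) := fun k =>
    Finset.sum_Icc_succ_top (by omega) _
  have hNstep : ∀ k : ℕ, Nsum R π (k+1)
      = Nsum R π k + π.τ (k+1) * (1 - π.α (k+1)) * R (π.a (k+1)) := fun k =>
    Finset.sum_Icc_succ_top (by omega) _
  have hT1 : π.Tsum 1 = π.τ 1 := by simp [DLC.Tsum]
  have hA1 : π.Asum 1 = π.α 1 * π.τ 1 := by simp [DLC.Asum]
  have hN1 : Nsum R π 1 = π.τ 1 * (1 - π.α 1) * R (π.a 1) := by simp [Nsum]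
  have hTpos : ∀ k, 1 ≤ k → k ≤ π.K → 0 < π.Tsum k := by
    intro k h1
    induction k, h1 using Nat.le_induction with
    | base => intro h2; rw [hT1]; exact hτ 1 le_rfl h2
    | succ k hk ih =>
        intro h2
        rw [hTstep]
        have i1 := ih (by omega)
        have i2 := hτ (k+1) (by omega) h2
        linarith
  have hApos : ∀ k, 1 ≤ k → k ≤ π.K → 0 ≤ π.Asum k := by
    intro k h1
    induction k, h1 using Nat.le_induction with
    | base =>
        intro h2; rw [hA1]
        exact mul_nonneg (hα 1 le_rfl h2) (hτ 1 le_rfl h2).le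
    | succ k hk ih =>
        intro h2
        rw [hAstep]
        have i1 := ih (by omega)
        have i2 := mul_nonneg (hα (k+1) (by omega) h2) (hτ (k+1) (by omega) h2).le
        linarith
  have hupper : ∀ k, 1 ≤ k → k ≤ π.K → π.a k < n →
      π.Asum k ≤ bp c R (π.a k) * π.Tsum k := by
    intro k h1 h2 hn'
    have hx := BR_upper hI (hBRend k (by simp [Finset.mem_Icc]; omega))
      (haA k h1 h2).1 hn'
    rw [DLC.avg, div_le_iff₀ (hTpos k h1 h2)] at hx
    linarith [hx]
  have hlower : ∀ k, 1 ≤ k → k ≤ π.K → 2 ≤ π.a k →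
      bp c R (π.a k - 1) * π.Tsum k ≤ π.Asum k := by
    intro k h1 h2 h2'
    have hx := BR_lower hI (hBRend k (by simp [Finset.mem_Icc]; omega)) h2' (haA k h1 h2).2
    rw [DLC.avg, le_div_iff₀ (hTpos k h1 h2)] at hx
    linarith [hx]
  intro k h1
  induction k, h1 using Nat.le_induction with
  | base =>
      intro hK
      have haf := haA 1 le_rfl hK
      constructor
      · rw [hN1, hT1]
        rcases Nat.lt_or_ge (π.a 1) 2 with h | h
        · have he : π.a 1 = 1 := by omega
          rw [he]
          have hVk : R 1 ≤ Vstar n c R := R1_le_Vstar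
          have ht := hτ 1 le_rfl hK
          have hA0 := hα 1 le_rfl hK
          have hR1nn : 0 ≤ R 1 := hI.2.2.1
          nlinarith [mul_nonneg (mul_nonneg ht.le hA0) hR1nn,
            mul_le_mul_of_nonneg_left hVk ht.le]
        · have hlow := hlower 1 le_rfl hK h
          rw [hT1, hA1] at hlow
          have ht := hτ 1 le_rfl hK
          have hble : bp c R (π.a 1 - 1) ≤ π.α 1 := by
            have := (mul_le_mul_iff_of_pos_right ht).mp (by linarith [hlow] :
              bp c R (π.a 1 - 1) * π.τ 1 ≤ π.α 1 * π.τ 1)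
            exact this
          have hvv := vff_self hI h haf.2
          have hvle : vff c R (π.a 1) (π.a 1) ≤ Vstar n c R :=
            vff_le_Vstar haf.1 haf.2 h le_rfl
          rw [hvv] at hvle
          have hRnn : 0 ≤ R (π.a 1) := R_nonneg hI haf.1 haf.2
          nlinarith [mul_le_mul_of_nonneg_left hvle ht.le]
      · intro m hm2 hma
        have hz : Nsum R π 1 - (π.Tsum 1 - π.Asum 1) * R (π.a 1) = 0 := by
          rw [hN1, hT1, hA1]; ring
        rw [hz, mul_zero, zero_add]
        exact mul_le_mul_of_nonneg_right
          (vff_le_Vstar haf.1 haf.2 hm2 hma) (hApos 1 le_rfl hK)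
  | succ k hk ih =>
      intro hK1'
      have hkK : k ≤ π.K := by omega
      obtain ⟨ihρ, ihm⟩ := ih hkK
      have haf := haA k (by omega) hkK
      have haf' := haA (k+1) (by omega) hK1'
      have hst : π.a (k+1) ∈ BR n c R (π.avg k) := by
        have := hBRstart (k+1) (by omega) hK1'
        simpa using this
      have hTk := hTpos k (by omega) hkK
      have haL' : 2 ≤ π.a (k+1) → bp c R (π.a (k+1) - 1) * π.Tsum k ≤ π.Asum k := by
        intro h2
        have hx := BR_lower hI hst h2 haf'.2
        rw [DLC.avg, le_div_iff₀ hTk] at hx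
        linarith [hx]
      have haU' : π.a (k+1) < n → π.Asum k ≤ bp c R (π.a (k+1)) * π.Tsum k := by
        intro h2
        have hx := BR_upper hI hst haf'.1 h2
        rw [DLC.avg, div_le_iff₀ hTk] at hx
        linarith [hx]
      have hsw := switch hI haf.1 haf.2 haf'.1 haf'.2 hTk
        (hlower k (by omega) hkK) (hupper k (by omega) hkK) haL' haU' ihρ ihm
      have hLend : 2 ≤ π.a (k+1) →
          bp c R (π.a (k+1) - 1) * (π.Tsum k + π.τ (k+1))
            ≤ π.Asum k + π.α (k+1) * π.τ (k+1) := by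
        intro h2
        have := hlower (k+1) (by omega) hK1' h2
        rw [hTstep, hAstep] at this
        exact this
      have hvle : ∀ m, 2 ≤ m → m ≤ π.a (k+1) → vff c R (π.a (k+1)) m ≤ Vstar n c R :=
        fun m hm2 hma => vff_le_Vstar haf'.1 haf'.2 hm2 hma
      have hsegstep := segstep hI haf'.1 haf'.2 (hτ (k+1) (by omega) hK1')
        (hα (k+1) (by omega) hK1') hTk (hApos k (by omega) hkK)
        R1_le_Vstar hLend hvle ihρ hsw
      constructor
      · rw [hNstep, hTstep]
        exact hsegstep.1
      · intro m hm2 hma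
        rw [hNstep, hTstep, hAstep]
        exact hsegstep.2 m hm2 hma

end NoB
namespace NoB

/-- The single-segment zero contract realizing value `R 1`. -/
lemma exists_base (hI : LinInstance n c R) :
    ∃ π' : DLC, π'.Valid n c R ∧ (∀ k ∈ Finset.Icc 1 π'.K, π'.α k ≤ 1) ∧
      π'.Util R = R 1 := by
  have hn2 : 2 ≤ n := hI.1
  refine ⟨⟨1, fun _ => 0, fun _ => 1, fun _ => 1⟩, ⟨le_rfl, ?_, ?_, ?_⟩, ?_, ?_⟩
  · intro k hk
    refine ⟨le_rfl, one_pos, ?_⟩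
    show (1:ℕ) ∈ Finset.Icc 1 n
    exact Finset.mem_Icc.mpr ⟨le_rfl, by omega⟩
  · intro k hk
    rw [Finset.mem_Icc] at hk
    have hk1 : k = 1 := le_antisymm hk.2 hk.1
    subst hk1
    have havg : DLC.avg ⟨1, fun _ => 0, fun _ => 1, fun _ => 1⟩ 1 = 0 := by
      simp [DLC.avg, DLC.Asum, DLC.Tsum]
    rw [havg]
    show (1:ℕ) ∈ BR n c R 0
    refine mem_BR hI le_rfl (by omega) ?_ ?_
    · simp [bp_zero]
    · intro h; exact (bp_pos hI le_rfl (by omega)).le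
  · intro k h2 hk1
    exact absurd (h2.trans hk1) (by decide)
  · intro k hk; exact zero_le_one
  · simp [DLC.Util, DLC.Tsum]

/-- The climb-then-free-fall contract realizing value `vff a m`. -/
lemma exists_freefall (hI : LinInstance n c R) {a m : ℕ} (hm2 : 2 ≤ m) (hma : m ≤ a)
    (han : a ≤ n) :
    ∃ π' : DLC, π'.Valid n c R ∧ (∀ k ∈ Finset.Icc 1 π'.K, π'.α k ≤ 1) ∧
      π'.Util R = vff c R a m := by
  have hn2 : 2 ≤ n := hI.1
  have ha2 : 2 ≤ a := le_trans hm2 hma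
  set b : ℕ → ℝ := bp c R with hb
  set K : ℕ := a - m + 1 with hK
  set π' : DLC := ⟨K,
    fun k => if k = 1 then b (a-1) else 0,
    fun k => if k = 1 then 1 else b (a-1) * (1 / b (a-k) - 1 / b (a-k+1)),
    fun k => a + 1 - k⟩ with hπ'
  have hπK : π'.K = K := rfl
  have hπτ : ∀ k, π'.τ k
      = if k = 1 then 1 else b (a-1) * (1 / b (a-k) - 1 / b (a-k+1)) := fun _ => rfl
  have hπα : ∀ k, π'.α k = if k = 1 then b (a-1) else 0 := fun _ => rfl
  have hπa : ∀ k, π'.a k = a + 1 - k := fun _ => rfl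
  have hb1pos : 0 < b (a-1) := bp_pos hI (by omega) (by omega)
  have hbpos : ∀ i, 1 ≤ i → i ≤ n - 1 → 0 < b i := fun i h1 h2 => bp_pos hI h1 h2
  have hτpos : ∀ k, 1 ≤ k → k ≤ K → 0 < π'.τ k := by
    intro k h1 h2
    rw [hπτ]
    rcases Nat.eq_or_lt_of_le h1 with h | h
    · rw [if_pos h.symm]; exact one_pos
    · rw [if_neg (by omega)]
      have hk2 : 2 ≤ k := h
      have hx : 0 < b (a-k) := hbpos _ (by omega) (by omega)
      have hxy : b (a-k) < b (a-k+1) := bp_lt hI (by omega) (by omega)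
      have h1d : 1 / b (a-k+1) < 1 / b (a-k) := one_div_lt_one_div_of_lt hx hxy
      have hsub : 0 < 1 / b (a-k) - 1 / b (a-k+1) := by linarith
      exact mul_pos hb1pos hsub
  have hTs : ∀ k, 1 ≤ k → k ≤ K → π'.Tsum k = b (a-1) / b (a-k) := by
    intro k h1
    induction k, h1 using Nat.le_induction with
    | base =>
        intro h2
        have h0 : π'.Tsum 1 = π'.τ 1 := by simp [DLC.Tsum]
        rw [h0, hπτ, if_pos rfl, div_self (ne_of_gt hb1pos)]
    | succ k hk ih =>
        intro h2
        have hstep : π'.Tsum (k+1) = π'.Tsum k + π'.τ (k+1) :=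
          Finset.sum_Icc_succ_top (by omega) _
        rw [hstep, ih (by omega), hπτ, if_neg (by omega)]
        have he : a - (k+1) + 1 = a - k := by omega
        rw [he]
        have hx : b (a-(k+1)) ≠ 0 := ne_of_gt (hbpos _ (by omega) (by omega))
        have hy : b (a-k) ≠ 0 := ne_of_gt (hbpos _ (by omega) (by omega))
        field_simp
        ring
  have hAs : ∀ k, 1 ≤ k → k ≤ K → π'.Asum k = b (a-1) := by
    intro k h1
    induction k, h1 using Nat.le_induction with
    | base =>
        intro h2
        have h0 : π'.Asum 1 = π'.α 1 * π'.τ 1 := by simp [DLC.Asum]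
        rw [h0, hπα, hπτ, if_pos rfl, if_pos rfl, mul_one]
    | succ k hk ih =>
        intro h2
        have hstep : π'.Asum (k+1) = π'.Asum k + π'.α (k+1) * π'.τ (k+1) :=
          Finset.sum_Icc_succ_top (by omega) _
        rw [hstep, ih (by omega), hπα, if_neg (by omega), zero_mul, add_zero]
  have havg : ∀ k, 1 ≤ k → k ≤ K → π'.avg k = b (a-k) := by
    intro k h1 h2
    rw [DLC.avg, hAs k h1 h2, hTs k h1 h2]
    have hx : b (a-k) ≠ 0 := ne_of_gt (hbpos _ (by omega) (by omega))
    field_simp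
  have hval : π'.Valid n c R := by
    refine ⟨by rw [hπK]; omega, ?_, ?_, ?_⟩
    · intro k hk
      rw [Finset.mem_Icc, hπK] at hk
      refine ⟨?_, hτpos k hk.1 hk.2, ?_⟩
      · rw [hπα]
        split
        · exact hb1pos.le
        · exact le_rfl
      · rw [hπa, Finset.mem_Icc]
        omega
    · intro k hk
      rw [Finset.mem_Icc, hπK] at hk
      rw [havg k hk.1 hk.2, hπa]
      have he : a + 1 - k - 1 = a - k := by omega
      refine mem_BR hI (by omega : 1 ≤ a + 1 - k) (by omega) ?_ ?_
      · rw [he]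
      · intro hlt
        exact bp_mono hI (by omega) (by omega)
    · intro k h2 hkK
      rw [hπK] at hkK
      have havg' : π'.avg (k-1) = b (a-(k-1)) := havg (k-1) (by omega) (by omega)
      rw [havg', hπa]
      have he : a - (k-1) = a - k + 1 := by omega
      have he2 : a + 1 - k - 1 = a - k := by omega
      rw [he]
      refine mem_BR hI (by omega : 1 ≤ a + 1 - k) (by omega) ?_ ?_
      · rw [he2]
        exact bp_mono hI (by omega) (by omega)
      · intro hlt
        have he3 : a - k + 1 = a + 1 - k := by omega
        rw [he3]
  have hbound : ∀ k ∈ Finset.Icc 1 π'.K, π'.α k ≤ 1 := by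
    intro k hk
    rw [hπα]
    split
    · exact bp_le_one hI (by omega)
    · exact zero_le_one
  have hsumid : ∀ d, d ≤ a - m →
      ∑ k ∈ Finset.Icc 2 (d+1), π'.τ k * (1 - π'.α k) * R (π'.a k)
        = b (a-1) * Gam c R (a-d) a - R a := by
    intro d
    induction d with
    | zero =>
        intro _
        rw [Finset.Icc_eq_empty (by omega), Finset.sum_empty]
        have h0 : a - 0 = a := by omega
        rw [h0, Gam_self]
        have : a - 1 ≥ 1 := by omega
        field_simp
        rw [← hb, div_self (ne_of_gt hb1pos)]; ring
    | succ d ihd =>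
        intro hd
        rw [Finset.sum_Icc_succ_top (by omega : 2 ≤ d + 1 + 1), ihd (by omega)]
        have hterm : π'.τ (d+2) * (1 - π'.α (d+2)) * R (π'.a (d+2))
            = b (a-1) * (1 / b (a-d-2) - 1 / b (a-d-1)) * R (a-d-1) := by
          rw [hπτ, hπα, hπa, if_neg (by omega), if_neg (by omega)]
          have e1 : a - (d+2) = a - d - 2 := by omega
          have e2 : a - (d+2) + 1 = a - d - 1 := by omega
          have e3 : a + 1 - (d+2) = a - d - 1 := by omega
          rw [e2, e3, e1]
          ring
        rw [hterm]
        have hgs : Gam c R (a-(d+1)) a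
            = Gam c R (a-d) a + R (a-d-1) / b (a-d-2) - R (a-d-1) / b (a-d-1) := by
          have e4 : a - (d+1) = a - d - 1 := by omega
          have e5 : a - d - 1 + 1 = a - d := by omega
          have e6 : a - d - 1 - 1 = a - d - 2 := by omega
          have hgstep := Gam_step (c := c) (R := R) (m := a - d - 1) (a := a) (by omega)
          rw [e5, e6] at hgstep
          rw [e4, hgstep]
        rw [hgs]
        ring
  have hKe : a - K = m - 1 := by omega
  have hTK : π'.Tsum K = b (a-1) / b (m-1) := by
    rw [hTs K (by omega) le_rfl, hKe]
  have hN : (∑ k ∈ Finset.Icc 1 π'.K, π'.τ k * (1 - π'.α k) * R (π'.a k))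
      = b (a-1) * (Gam c R m a - R a) := by
    have hsplit : Finset.Icc 1 K = insert 1 (Finset.Icc 2 K) := by
      ext x; simp only [Finset.mem_Icc, Finset.mem_insert]; omega
    rw [hπK, hsplit, Finset.sum_insert (by simp [Finset.mem_Icc])]
    have hfirst : π'.τ 1 * (1 - π'.α 1) * R (π'.a 1) = (1 - b (a-1)) * R a := by
      rw [hπτ, hπα, hπa, if_pos rfl, if_pos rfl]
      have h1 : a + 1 - 1 = a := by omega
      rw [h1]; ring
    have hKd : K = (a - m) + 1 := rfl
    have hrest := hsumid (a - m) le_rfl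
    rw [← hKd] at hrest
    rw [hfirst, hrest]
    have hme : a - (a - m) = m := by omega
    rw [hme]
    ring
  have hbm : b (m-1) ≠ 0 := ne_of_gt (hbpos _ (by omega) (by omega))
  refine ⟨π', hval, hbound, ?_⟩
  rw [DLC.Util, hN]
  rw [hπK, hTK, vff]
  field_simp
  ring

end NoB
/-- The principal never benefits from offering linear
contracts with scalar exceeding 1: every valid dynamic linear contract is
dominated by a valid one all of whose scalars are at most 1. -/
theorem no_benefit_above_one (n : ℕ) (c R : ℕ → ℝ) (hInst : LinInstance n c R)
    (π : DLC) (hπ : π.Valid n c R) :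
    ∃ π' : DLC, π'.Valid n c R ∧
      (∀ k ∈ Finset.Icc 1 π'.K, π'.α k ≤ 1) ∧
      π'.Util R ≥ π.Util R := by
  classical
  have hK1 : 1 ≤ π.K := hπ.1
  have hTK : 0 < π.Tsum π.K := by
    rw [DLC.Tsum]
    refine Finset.sum_pos ?_ ⟨1, Finset.mem_Icc.mpr ⟨le_rfl, hK1⟩⟩
    intro i hi
    exact (hπ.2.1 i hi).2.1
  have hmain := (NoB.util_bound hInst π hπ π.K hK1 le_rfl).1
  have hUπ : π.Util R ≤ NoB.Vstar n c R := by
    have hrfl : π.Util R = NoB.Nsum R π π.K / π.Tsum π.K := rfl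
    rw [hrfl, div_le_iff₀ hTK]
    exact hmain
  have hmem : NoB.Vstar n c R ∈ NoB.cand n c R := Finset.max'_mem _ _
  rcases Finset.mem_insert.mp hmem with hcase | hcase
  · obtain ⟨π', h1, h2, h3⟩ := NoB.exists_base hInst
    refine ⟨π', h1, h2, ?_⟩
    rw [ge_iff_le, h3, ← hcase]
    exact hUπ
  · obtain ⟨p, hp, hpv⟩ := Finset.mem_image.mp hcase
    rw [Finset.mem_filter, Finset.mem_product, Finset.mem_Icc, Finset.mem_Icc] at hp
    obtain ⟨⟨⟨hp1, hp2⟩, hp3, hp4⟩, hp5⟩ := hp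
    obtain ⟨π', h1, h2, h3⟩ := NoB.exists_freefall hInst hp3 hp5 hp2
    refine ⟨π', h1, h2, ?_⟩
    rw [ge_iff_le, h3, hpv]
    exact hUπ
end

section
/- Consider the principal-agent instance with n = 4 actions, m = 4 outcomes, costs c = (0, 0.2, 0.4, 0.5), rewards r = (0, 1.0, 1.6, 2.0), and forecast matrix F with rows (1.00, 0.00, 0.00, 0.00), (0.45, 0.20, 0.25, 0.10), (0.35, 0.05, 0.25, 0.35), (0.15, 0.30, 0.30, 0.25). For this instance, every valid free-fall dynamic contract π′ satisfies Util(π′) ≤ 0.753, while there exists a valid dynamic contract π with Util(π) ≥ 0.764. In particular, for general (non-scaled) contracts, free-fall dynamic contracts are not optimal among dynamic contracts. -/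
open Finset

/-- Agent's utility `u_A(p, i) = Σ_j F_{ij} p_j − c_i` from action `i` under
contract `p`. -/
noncomputable def uA (m : ℕ) (c : ℕ → ℝ) (F : ℕ → ℕ → ℝ) (p : ℕ → ℝ) (i : ℕ) : ℝ :=
  (∑ j ∈ Finset.Icc 1 m, F i j * p j) - c i

/-- Principal's utility `u_P(p, i) = Σ_j F_{ij} (r_j − p_j)`. -/
noncomputable def uP (m : ℕ) (F : ℕ → ℕ → ℝ) (r : ℕ → ℝ) (p : ℕ → ℝ) (i : ℕ) : ℝ :=
  ∑ j ∈ Finset.Icc 1 m, F i j * (r j - p j)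

/-- Best-response set of the agent to contract `p`. -/
def BRg (n m : ℕ) (c : ℕ → ℝ) (F : ℕ → ℕ → ℝ) (p : ℕ → ℝ) : Set ℕ :=
  {i | i ∈ Finset.Icc 1 n ∧ ∀ j ∈ Finset.Icc 1 n, uA m c F p j ≤ uA m c F p i}

/-- A general dynamic contract with `K` segments (indexed `1,…,K`):
contracts `p k : ℕ → ℝ` (coordinates `1,…,m`), durations `τ`, actions `a`. -/
structure DGC where
  K : ℕ
  p : ℕ → ℕ → ℝ
  τ : ℕ → ℝ
  a : ℕ → ℕ

namespace DGC

/-- Total duration of the first `k` segments. -/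
noncomputable def Tsum (π : DGC) (k : ℕ) : ℝ := ∑ j ∈ Finset.Icc 1 k, π.τ j

/-- Historical average contract `ρ^k` after the first `k` segments, with the
convention `ρ^0 := p^1`. -/
noncomputable def rho (π : DGC) (k : ℕ) (j : ℕ) : ℝ :=
  if k = 0 then π.p 1 j
  else (∑ k' ∈ Finset.Icc 1 k, π.τ k' * π.p k' j) / π.Tsum k

/-- Validity of a general dynamic contract. -/
def Valid (n m : ℕ) (c : ℕ → ℝ) (F : ℕ → ℕ → ℝ) (π : DGC) : Prop :=
  1 ≤ π.K ∧
    (∀ k ∈ Finset.Icc 1 π.K,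
      (∀ j ∈ Finset.Icc 1 m, 0 ≤ π.p k j) ∧ 0 < π.τ k ∧ π.a k ∈ Finset.Icc 1 n) ∧
    (∀ k ∈ Finset.Icc 1 π.K, π.a k ∈ BRg n m c F (π.rho k)) ∧
    (∀ k, 2 ≤ k → k ≤ π.K → π.a k ∈ BRg n m c F (π.rho (k - 1)))

/-- Time-averaged principal utility. -/
noncomputable def Util (m : ℕ) (F : ℕ → ℕ → ℝ) (r : ℕ → ℝ) (π : DGC) : ℝ :=
  (∑ k ∈ Finset.Icc 1 π.K, π.τ k * uP m F r (π.p k) (π.a k)) / π.Tsum π.K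

/-- Segment `k` is degenerate if `BR(ρ^{k-1}) ∩ BR(ρ^k)` has at least two
elements (with `ρ^0 := p^1`). -/
def Degenerate (n m : ℕ) (c : ℕ → ℝ) (F : ℕ → ℕ → ℝ) (π : DGC) (k : ℕ) : Prop :=
  ∃ i j, i ≠ j ∧
    i ∈ BRg n m c F (π.rho (k - 1)) ∩ BRg n m c F (π.rho k) ∧
    j ∈ BRg n m c F (π.rho (k - 1)) ∩ BRg n m c F (π.rho k)

open scoped Classical in
/-- Time-averaged principal utility counting only non-degenerate segments. -/
noncomputable def Util0 (n m : ℕ) (c : ℕ → ℝ) (F : ℕ → ℕ → ℝ) (r : ℕ → ℝ)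
    (π : DGC) : ℝ :=
  (∑ k ∈ Finset.Icc 1 π.K,
    if Degenerate n m c F π k then 0 else π.τ k * uP m F r (π.p k) (π.a k)) /
    π.Tsum π.K

/-- Free-fall: the zero contract is offered on every segment after the first. -/
def FreeFall (π : DGC) : Prop := ∀ k, 2 ≤ k → k ≤ π.K → ∀ j, π.p k j = 0

end DGC

/-- Costs of the counterexample instance: `c = (0, 0.2, 0.4, 0.5)`. -/
noncomputable def cEx : ℕ → ℝ := fun i =>
  if i = 2 then 0.2 else if i = 3 then 0.4 else if i = 4 then 0.5 else 0

/-- Rewards of the counterexample instance: `r = (0, 1.0, 1.6, 2.0)`. -/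
noncomputable def rEx : ℕ → ℝ := fun j =>
  if j = 2 then 1.0 else if j = 3 then 1.6 else if j = 4 then 2.0 else 0

/-- Forecast matrix of the counterexample instance. -/
noncomputable def FEx : ℕ → ℕ → ℝ := fun i j =>
  match i, j with
  | 1, 1 => 1.00
  | 2, 1 => 0.45 | 2, 2 => 0.20 | 2, 3 => 0.25 | 2, 4 => 0.10
  | 3, 1 => 0.35 | 3, 2 => 0.05 | 3, 3 => 0.25 | 3, 4 => 0.35
  | 4, 1 => 0.15 | 4, 2 => 0.30 | 4, 3 => 0.30 | 4, 4 => 0.25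
  | _, _ => 0


open Finset

lemma sumIcc14 (f : ℕ → ℝ) : ∑ j ∈ Finset.Icc 1 4, f j = f 1 + f 2 + f 3 + f 4 := by
  have h : Finset.Icc 1 4 = ({1,2,3,4} : Finset ℕ) := by decide
  rw [h]; simp [Finset.sum_insert, Finset.mem_insert]; ring

lemma sumIcc12 (f : ℕ → ℝ) : ∑ j ∈ Finset.Icc 1 2, f j = f 1 + f 2 := by
  have h : Finset.Icc 1 2 = ({1,2} : Finset ℕ) := by decide
  rw [h]; simp [Finset.sum_insert, Finset.mem_insert]

lemma sumIcc11 (f : ℕ → ℝ) : ∑ j ∈ Finset.Icc 1 1, f j = f 1 := by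
  simp

set_option maxHeartbeats 2000000 in
lemma key_ineq_s18 (v : ℕ → ℝ) (T G : ℝ) (hv : ∀ j ∈ Finset.Icc 1 4, 0 ≤ v j)
    (hT : 0 ≤ T)
    (h : ∀ i ∈ Finset.Icc 1 4, (∑ j ∈ Finset.Icc 1 4, FEx i j * v j) - T * cEx i ≤ G)
    (a : ℕ) (ha : a ∈ Finset.Icc 1 4) :
    0.3 * (∑ j ∈ Finset.Icc 1 4, FEx a j * v j) ≤ 0.123 * T + 1.3 * G := by
  have hv1 := hv 1 (by simp); have hv2 := hv 2 (by simp)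
  have hv3 := hv 3 (by simp); have hv4 := hv 4 (by simp)
  have h1 := h 1 (by simp); have h2 := h 2 (by simp)
  have h3 := h 3 (by simp); have h4 := h 4 (by simp)
  rw [sumIcc14] at h1 h2 h3 h4 ⊢
  norm_num [FEx, cEx] at h1 h2 h3 h4
  have ha' : 1 ≤ a ∧ a ≤ 4 := by simpa using ha
  obtain ⟨ha1, ha2⟩ := ha'
  interval_cases a <;> · norm_num [FEx, cEx]; linarith

noncomputable def pW : ℕ → ℕ → ℝ := fun k j =>
  if k = 1 then (if j = 2 then 18/19 else if j = 4 then 26/19 else 0)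
  else (if j = 3 then 4/175 else if j = 4 then 4/5 else 0)

noncomputable def τW : ℕ → ℝ := fun k => if k = 1 then 19 else 21

def aW : ℕ → ℕ := fun k => if k = 1 then 4 else 3

noncomputable def πW : DGC := ⟨2, pW, τW, aW⟩

lemma πW_rho1 (j : ℕ) : πW.rho 1 j = pW 1 j := by
  unfold DGC.rho DGC.Tsum
  rw [if_neg one_ne_zero, sumIcc11, sumIcc11]
  show τW 1 * pW 1 j / τW 1 = pW 1 j
  norm_num [τW]

lemma πW_rho2 (j : ℕ) : πW.rho 2 j = (19 * pW 1 j + 21 * pW 2 j) / 40 := by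
  unfold DGC.rho DGC.Tsum
  rw [if_neg (by norm_num : (2:ℕ) ≠ 0), sumIcc12, sumIcc12]
  show (τW 1 * pW 1 j + τW 2 * pW 2 j) / (τW 1 + τW 2) = _
  norm_num [τW]

lemma πW_BR1_4 : (4 : ℕ) ∈ BRg 4 4 cEx FEx (πW.rho 1) := by
  refine ⟨by norm_num, ?_⟩
  intro j hj
  rw [Finset.mem_Icc] at hj
  obtain ⟨hj1, hj2⟩ := hj
  unfold uA
  rw [sumIcc14, sumIcc14]
  simp only [πW_rho1]
  interval_cases j <;> norm_num [pW, cEx, FEx]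

lemma πW_BR1_3 : (3 : ℕ) ∈ BRg 4 4 cEx FEx (πW.rho 1) := by
  refine ⟨by norm_num, ?_⟩
  intro j hj
  rw [Finset.mem_Icc] at hj
  obtain ⟨hj1, hj2⟩ := hj
  unfold uA
  rw [sumIcc14, sumIcc14]
  simp only [πW_rho1]
  interval_cases j <;> norm_num [pW, cEx, FEx]

lemma πW_BR2_3 : (3 : ℕ) ∈ BRg 4 4 cEx FEx (πW.rho 2) := by
  refine ⟨by norm_num, ?_⟩
  intro j hj
  rw [Finset.mem_Icc] at hj
  obtain ⟨hj1, hj2⟩ := hj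
  unfold uA
  rw [sumIcc14, sumIcc14]
  simp only [πW_rho2]
  interval_cases j <;> norm_num [pW, cEx, FEx]

lemma πW_valid : πW.Valid 4 4 cEx FEx := by
  refine ⟨by norm_num [πW], ?_, ?_, ?_⟩
  · intro k hk
    rw [show πW.K = 2 from rfl, Finset.mem_Icc] at hk
    obtain ⟨hk1, hk2⟩ := hk
    refine ⟨?_, ?_, ?_⟩
    · intro j hj
      rw [Finset.mem_Icc] at hj
      obtain ⟨hj1, hj2⟩ := hj
      show (0:ℝ) ≤ pW k j
      interval_cases k <;> interval_cases j <;> norm_num [pW]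
    · show (0:ℝ) < τW k
      interval_cases k <;> norm_num [τW]
    · show aW k ∈ Finset.Icc 1 4
      interval_cases k <;> norm_num [aW]
  · intro k hk
    rw [show πW.K = 2 from rfl, Finset.mem_Icc] at hk
    obtain ⟨hk1, hk2⟩ := hk
    interval_cases k
    · show aW 1 ∈ BRg 4 4 cEx FEx (πW.rho 1)
      rw [show aW 1 = 4 from rfl]
      exact πW_BR1_4
    · show aW 2 ∈ BRg 4 4 cEx FEx (πW.rho 2)
      rw [show aW 2 = 3 from rfl]
      exact πW_BR2_3
  · intro k hk2 hkK
    rw [show πW.K = 2 from rfl] at hkK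
    have : k = 2 := by omega
    subst this
    show aW 2 ∈ BRg 4 4 cEx FEx (πW.rho 1)
    rw [show aW 2 = 3 from rfl]
    exact πW_BR1_3

lemma πW_util : 0.764 ≤ πW.Util 4 FEx rEx := by
  unfold DGC.Util DGC.Tsum
  rw [show πW.K = 2 from rfl, sumIcc12, sumIcc12]
  unfold uP
  rw [sumIcc14, sumIcc14]
  show (0.764 : ℝ) ≤ (τW 1 * _ + τW 2 * _) / (τW 1 + τW 2)
  norm_num [πW, τW, pW, aW, FEx, rEx]
set_option maxHeartbeats 2000000 in
lemma freefall_bound (π : DGC) (hval : π.Valid 4 4 cEx FEx) (hff : π.FreeFall) :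
    π.Util 4 FEx rEx ≤ 0.753 := by
  obtain ⟨hK1, hseg, hBR, hBR2⟩ := hval
  have hτ : ∀ k ∈ Finset.Icc 1 π.K, 0 < π.τ k := fun k hk => (hseg k hk).2.1
  have hTpos : ∀ k, 1 ≤ k → k ≤ π.K → 0 < π.Tsum k := by
    intro k h1 h2
    apply Finset.sum_pos
    · intro i hi
      rw [Finset.mem_Icc] at hi
      exact hτ i (Finset.mem_Icc.mpr ⟨hi.1, le_trans hi.2 h2⟩)
    · exact ⟨1, Finset.mem_Icc.mpr ⟨le_refl 1, h1⟩⟩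
  have h1K : (1 : ℕ) ∈ Finset.Icc 1 π.K := Finset.mem_Icc.mpr ⟨le_refl 1, hK1⟩
  have hτ1 : 0 < π.τ 1 := hτ 1 h1K
  set v : ℕ → ℝ := fun j => π.τ 1 * π.p 1 j with hvdef
  have hvnn : ∀ j ∈ Finset.Icc 1 4, 0 ≤ v j := by
    intro j hj
    exact mul_nonneg hτ1.le ((hseg 1 h1K).1 j hj)
  have hnum : ∀ k, 1 ≤ k → k ≤ π.K → ∀ j,
      (∑ k' ∈ Finset.Icc 1 k, π.τ k' * π.p k' j) = v j := by
    intro k h1 h2 j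
    rw [Finset.sum_eq_single 1]
    · intro b hb hb1
      rw [Finset.mem_Icc] at hb
      rw [hff b (by omega) (by omega) j, mul_zero]
    · intro hmem; exact absurd (Finset.mem_Icc.mpr ⟨le_refl 1, h1⟩) hmem
  have hrho : ∀ k, 1 ≤ k → k ≤ π.K → ∀ j, π.rho k j = v j / π.Tsum k := by
    intro k h1 h2 j
    unfold DGC.rho
    rw [if_neg (by omega), hnum k h1 h2]
  set Q : ℕ → ℝ := fun i => ∑ j ∈ Finset.Icc 1 4, FEx i j * v j with hQdef
  have huA : ∀ k, 1 ≤ k → k ≤ π.K → ∀ i,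
      uA 4 cEx FEx (π.rho k) i = Q i / π.Tsum k - cEx i := by
    intro k h1 h2 i
    unfold uA
    congr 1
    have e : ∀ j ∈ Finset.Icc 1 4, FEx i j * π.rho k j = (FEx i j * v j) / π.Tsum k := by
      intro j hj; rw [hrho k h1 h2 j]; ring
    rw [Finset.sum_congr rfl e, ← Finset.sum_div]
  have hP : ∀ k, 1 ≤ k → k ≤ π.K → ∀ i ∈ Finset.Icc 1 4,
      Q i - π.Tsum k * cEx i ≤ Q (π.a k) - π.Tsum k * cEx (π.a k) := by
    intro k h1 h2 i hi
    have hb := (hBR k (Finset.mem_Icc.mpr ⟨h1, h2⟩)).2 i hi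
    rw [huA k h1 h2 i, huA k h1 h2 (π.a k)] at hb
    have hT := hTpos k h1 h2
    have hTne : π.Tsum k ≠ 0 := ne_of_gt hT
    have eI : ∀ x c0 : ℝ, π.Tsum k * (x / π.Tsum k - c0) = x - π.Tsum k * c0 := by
      intro x c0; field_simp
    have := mul_le_mul_of_nonneg_left hb hT.le
    rw [eI, eI] at this
    exact this
  have hP2 : ∀ k, 2 ≤ k → k ≤ π.K → ∀ i ∈ Finset.Icc 1 4,
      Q i - π.Tsum (k - 1) * cEx i ≤ Q (π.a k) - π.Tsum (k - 1) * cEx (π.a k) := by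
    intro k h1 h2 i hi
    have hb := (hBR2 k h1 h2).2 i hi
    rw [huA (k-1) (by omega) (by omega) i, huA (k-1) (by omega) (by omega) (π.a k)] at hb
    have hT := hTpos (k-1) (by omega) (by omega)
    have hTne : π.Tsum (k-1) ≠ 0 := ne_of_gt hT
    have eI : ∀ x c0 : ℝ, π.Tsum (k-1) * (x / π.Tsum (k-1) - c0) = x - π.Tsum (k-1) * c0 := by
      intro x c0; field_simp
    have := mul_le_mul_of_nonneg_left hb hT.le
    rw [eI, eI] at this
    exact this
  have hTsucc : ∀ k, π.Tsum (k+1) = π.Tsum k + π.τ (k+1) := by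
    intro k
    exact Finset.sum_Icc_succ_top (by omega) _
  have hGstep : ∀ k, 1 ≤ k → k + 1 ≤ π.K →
      π.τ (k+1) * cEx (π.a (k+1)) =
        (Q (π.a k) - π.Tsum k * cEx (π.a k))
        - (Q (π.a (k+1)) - π.Tsum (k+1) * cEx (π.a (k+1))) := by
    intro k h1 h2
    have ha' : π.a (k+1) ∈ Finset.Icc 1 4 :=
      (hseg (k+1) (Finset.mem_Icc.mpr ⟨by omega, h2⟩)).2.2
    have hak : π.a k ∈ Finset.Icc 1 4 :=
      (hseg k (Finset.mem_Icc.mpr ⟨h1, by omega⟩)).2.2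
    have e1 := hP k h1 (by omega) (π.a (k+1)) ha'
    have e2 := hP2 (k+1) (by omega) h2 (π.a k) hak
    simp only [Nat.add_sub_cancel] at e2
    rw [hTsucc k]
    ring_nf
    ring_nf at e1 e2
    linarith
  have hcost : ∀ k, 1 ≤ k → k ≤ π.K →
      (∑ k' ∈ Finset.Icc 1 k, π.τ k' * cEx (π.a k'))
        = Q (π.a 1) - (Q (π.a k) - π.Tsum k * cEx (π.a k)) := by
    intro k h1
    induction k, h1 using Nat.le_induction with
    | base =>
      intro _
      rw [sumIcc11]
      have hT1 : π.Tsum 1 = π.τ 1 := sumIcc11 _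
      rw [hT1]; ring
    | succ k hk ih =>
      intro h2
      have ih' := ih (by omega)
      rw [Finset.sum_Icc_succ_top (by omega : 1 ≤ k + 1), ih', hGstep k hk h2]
      ring
  have hR : ∀ i ∈ Finset.Icc 1 4,
      (∑ j ∈ Finset.Icc 1 4, FEx i j * rEx j) ≤ 1.3 * cEx i + 0.63 := by
    intro i hi
    rw [sumIcc14]
    rw [Finset.mem_Icc] at hi
    obtain ⟨hi1, hi2⟩ := hi
    interval_cases i <;> norm_num [FEx, rEx, cEx]
  have huP0 : ∀ k, 2 ≤ k → k ≤ π.K →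
      uP 4 FEx rEx (π.p k) (π.a k) = ∑ j ∈ Finset.Icc 1 4, FEx (π.a k) j * rEx j := by
    intro k h2 hK
    unfold uP
    exact Finset.sum_congr rfl fun j _ => by rw [hff k h2 hK j, sub_zero]
  have huP1 : π.τ 1 * uP 4 FEx rEx (π.p 1) (π.a 1)
      = π.τ 1 * (∑ j ∈ Finset.Icc 1 4, FEx (π.a 1) j * rEx j) - Q (π.a 1) := by
    unfold uP
    rw [hQdef]
    simp only [hvdef]
    rw [sumIcc14, sumIcc14, sumIcc14]
    ring
  have hTK := hTpos π.K hK1 (le_refl _)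
  have hsplit : ∀ k ∈ Finset.Icc 1 π.K,
      π.τ k * uP 4 FEx rEx (π.p k) (π.a k)
      ≤ (1.3 * (π.τ k * cEx (π.a k)) + 0.63 * π.τ k)
        - (if k = 1 then Q (π.a 1) else 0) := by
    intro k hk
    have hk' := Finset.mem_Icc.mp hk
    have hak : π.a k ∈ Finset.Icc 1 4 := (hseg k hk).2.2
    have hRk := hR (π.a k) hak
    have hτk := hτ k hk
    by_cases hk1 : k = 1
    · subst hk1
      simp only [if_pos]
      have := mul_le_mul_of_nonneg_left hRk hτk.le
      linarith [huP1]
    · simp only [if_neg hk1]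
      rw [huP0 k (by omega) hk'.2]
      have := mul_le_mul_of_nonneg_left hRk hτk.le
      linarith
  have hsum := Finset.sum_le_sum hsplit
  rw [Finset.sum_sub_distrib, Finset.sum_ite_eq' (Finset.Icc 1 π.K) 1
      (fun _ => Q (π.a 1)), if_pos h1K, Finset.sum_add_distrib,
      ← Finset.mul_sum, ← Finset.mul_sum, hcost π.K hK1 (le_refl _)] at hsum
  have hTdef : π.Tsum π.K = ∑ k ∈ Finset.Icc 1 π.K, π.τ k := rfl
  rw [← hTdef] at hsum
  have haK : π.a π.K ∈ Finset.Icc 1 4 :=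
    (hseg π.K (Finset.mem_Icc.mpr ⟨hK1, le_refl _⟩)).2.2
  have hkey : 0.3 * Q (π.a 1) ≤ 0.123 * π.Tsum π.K
      + 1.3 * (Q (π.a π.K) - π.Tsum π.K * cEx (π.a π.K)) :=
    key_ineq_s18 v (π.Tsum π.K) (Q (π.a π.K) - π.Tsum π.K * cEx (π.a π.K)) hvnn hTK.le
      (fun i hi => hP π.K hK1 (le_refl _) i hi) (π.a 1) (hseg 1 h1K).2.2
  unfold DGC.Util
  rw [div_le_iff₀ hTK]
  linarith
/-- In the given 4-action/4-outcome instance, every valid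
free-fall dynamic contract has utility at most `0.753`, while some valid
dynamic contract achieves utility at least `0.764`; hence free-fall contracts
are not optimal among general dynamic contracts. -/
theorem free_fall_not_optimal_general :
    (∀ π' : DGC, π'.Valid 4 4 cEx FEx → π'.FreeFall →
      π'.Util 4 FEx rEx ≤ 0.753) ∧
    (∃ π : DGC, π.Valid 4 4 cEx FEx ∧ 0.764 ≤ π.Util 4 FEx rEx) := by
  exact ⟨fun π' h hf => freefall_bound π' h hf, ⟨πW, πW_valid, πW_util⟩⟩
end

section
/- For every valid free-fall dynamic linear contract π there exists a valid free-fall dynamic linear contract π′ = ((α′^1, τ′^1, a′^1), …, (α′^{K′}, τ′^{K′}, a′^{K′})) with Util(π′) ≥ Util(π) that both starts and ends at indifference points: α′^1 = α_{i−1,i} and a′^1 = i for some 1 ≤ i ≤ n, and the final time-averaged contract satisfies ᾱ′^{K′} = α_{j−1,j} for some 1 ≤ j ≤ i, where α_{0,1} := 0. (Hence an optimal free-fall linear contract is determined by a pair of indifference points.) -/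
open Finset

/- ---------- generic helpers ---------- -/

lemma chain_le (f : ℕ → ℝ) {a b : ℕ} (h : a ≤ b)
    (st : ∀ l, a ≤ l → l < b → f l ≤ f (l + 1)) : f a ≤ f b := by
  induction b with
  | zero => have : a = 0 := by omega
            simp [this]
  | succ b ih =>
      rcases Nat.lt_or_ge a (b+1) with hlt | hge
      · have hab : a ≤ b := by omega
        exact le_trans (ih hab (fun l hl hl2 => st l hl (by omega))) (st b hab (by omega))
      · have : a = b + 1 := by omega
        simp [this]

lemma sum_tele (h : ℕ → ℝ) {K : ℕ} (hK : 1 ≤ K) :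
    ∑ k ∈ Icc 2 K, (h k - h (k - 1)) = h K - h 1 := by
  induction K with
  | zero => omega
  | succ K ih =>
      rcases Nat.lt_or_ge K 1 with h1 | h1
      · have : K = 0 := by omega
        subst this; simp
      · rw [Finset.sum_Icc_succ_top (by omega : 2 ≤ K + 1), ih h1]
        simp

lemma min_diff_nonneg {t1 t2 s : ℝ} (h : t1 ≤ t2) : 0 ≤ min t2 s - min t1 s := by
  simp [min_def]; split_ifs <;> linarith

lemma min_diff_le {t1 t2 s : ℝ} (h : t1 ≤ t2) : min t2 s - min t1 s ≤ t2 - t1 := by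
  simp [min_def]; split_ifs <;> linarith

lemma min_diff_mono {t1 t2 s s' : ℝ} (h : t1 ≤ t2) (hss : s ≤ s') :
    min t2 s - min t1 s ≤ min t2 s' - min t1 s' := by
  simp [min_def]; split_ifs <;> linarith

lemma min_diff_full {t1 t2 s : ℝ} (h : t1 ≤ t2) (h2 : t2 ≤ s) :
    min t2 s - min t1 s = t2 - t1 := by
  simp [min_def]; split_ifs <;> linarith

lemma min_diff_zero {t1 t2 s : ℝ} (h : s ≤ t1) (h' : s ≤ t2) : min t2 s - min t1 s = 0 := by
  simp [min_def]; split_ifs <;> linarith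

/- ---------- instance lemmas ---------- -/

section Inst
variable {n : ℕ} {c R : ℕ → ℝ} (hI : LinInstance n c R)
include hI

lemma R_mono {a b : ℕ} (ha : 1 ≤ a) (hab : a ≤ b) (hb : b ≤ n) : R a ≤ R b :=
  chain_le R hab (fun l hl hl2 => le_of_lt (hI.2.2.2.2.1 l (by omega) (by omega)))

lemma R_nonneg {a : ℕ} (ha : 1 ≤ a) (hb : a ≤ n) : 0 ≤ R a :=
  le_trans hI.2.2.1 (R_mono hI le_rfl ha hb)

lemma c_mono {a b : ℕ} (ha : 1 ≤ a) (hab : a ≤ b) (hb : b ≤ n) : c a ≤ c b :=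
  chain_le c hab (fun l hl hl2 => le_of_lt (hI.2.2.2.1 l (by omega) (by omega)))

lemma indiff_mono {a b : ℕ} (ha : 1 ≤ a) (hab : a ≤ b) (hb : b ≤ n - 1) :
    indiff c R a ≤ indiff c R b :=
  chain_le (indiff c R) hab (fun l hl hl2 => le_of_lt (hI.2.2.2.2.2.2.1 l (by omega) (by omega)))

lemma indiff_pos {a : ℕ} (ha : 1 ≤ a) (hb : a ≤ n - 1) : 0 < indiff c R a :=
  lt_of_lt_of_le hI.2.2.2.2.2.1 (indiff_mono hI le_rfl ha hb)

/-- step identity -/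
lemma step_id {l : ℕ} (hl : 1 ≤ l) (hln : l ≤ n - 1) (x : ℝ) :
    (x * R (l+1) - c (l+1)) - (x * R l - c l) = (R (l+1) - R l) * (x - indiff c R l) := by
  have hR : R l < R (l+1) := hI.2.2.2.2.1 l hl (by omega)
  have hne : R (l+1) - R l ≠ 0 := by linarith
  have : indiff c R l * (R (l+1) - R l) = c (l+1) - c l := by
    rw [indiff]; field_simp
  nlinarith [this]

lemma mem_BR {m : ℕ} (hm1 : 1 ≤ m) (hmn : m ≤ n) (x : ℝ)
    (hlo : 2 ≤ m → indiff c R (m-1) ≤ x) (hhi : m ≤ n - 1 → x ≤ indiff c R m) :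
    m ∈ BR n c R x := by
  refine ⟨by simp [hm1, hmn], fun j hj => ?_⟩
  simp only [Finset.mem_Icc] at hj
  rcases le_total j m with hjm | hmj
  · have key : (fun l => x * R l - c l) j ≤ (fun l => x * R l - c l) m := by
      refine chain_le (fun l => x * R l - c l) hjm (fun l hl hl2 => ?_)
      have hm2 : 2 ≤ m := by omega
      have hx : indiff c R l ≤ x := by
        refine le_trans ?_ (hlo hm2)
        exact indiff_mono hI (by omega) (by omega) (by omega)
      have hR : R l < R (l+1) := hI.2.2.2.2.1 l (by omega) (by omega)
      have := step_id hI (l := l) (by omega) (by omega) x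
      nlinarith
    exact key
  · have key : (fun l => -(x * R l - c l)) m ≤ (fun l => -(x * R l - c l)) j := by
      refine chain_le (fun l => -(x * R l - c l)) hmj (fun l hl hl2 => ?_)
      have hx : x ≤ indiff c R l := by
        refine le_trans (hhi (by omega)) ?_
        exact indiff_mono hI (by omega) hl (by omega)
      have hR : R l < R (l+1) := hI.2.2.2.2.1 l (by omega) (by omega)
      have := step_id hI (l := l) (by omega) (by omega) x
      nlinarith
    dsimp only at key
    linarith

lemma BR_lower_s19 {m : ℕ} (hm : 2 ≤ m) (hmn : m ≤ n) {x : ℝ}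
    (h : m ∈ BR n c R x) : indiff c R (m-1) ≤ x := by
  have h2 := h.2 (m-1) (by simp; omega)
  have hl1 : 1 ≤ m - 1 := by omega
  have heq : m - 1 + 1 = m := by omega
  have := step_id hI (l := m-1) hl1 (by omega) x
  rw [heq] at this
  have hR : R (m-1) < R m := by
    have := hI.2.2.2.2.1 (m-1) hl1 (by omega); rwa [heq] at this
  nlinarith

lemma BR_upper_s19 {m : ℕ} (hm : 1 ≤ m) (hmn : m ≤ n - 1) {x : ℝ}
    (h : m ∈ BR n c R x) : x ≤ indiff c R m := by
  have h2 := h.2 (m+1) (by simp; omega)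
  have := step_id hI (l := m) hm hmn x
  have hR : R m < R (m+1) := hI.2.2.2.2.1 m hm (by omega)
  nlinarith

lemma BR_zero {m : ℕ} (h : m ∈ BR n c R 0) : m = 1 := by
  by_contra hne
  have hm : m ∈ Finset.Icc 1 n := h.1
  simp only [Finset.mem_Icc] at hm
  have hm2 : 2 ≤ m := by omega
  have h2 := h.2 1 (by simp; omega)
  have hc : c 1 < c m := by
    calc c 1 < c 2 := hI.2.2.2.1 1 le_rfl (by omega)
    _ ≤ c m := c_mono hI (by omega) hm2 hm.2
  simp only [zero_mul] at h2
  linarith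

end Inst

/- ---------- DLC helper lemmas ---------- -/

namespace DLC

lemma Tsum_zero (π : DLC) : π.Tsum 0 = 0 := by simp [Tsum]

lemma Tsum_succ (π : DLC) {k : ℕ} (hk : 1 ≤ k) : π.Tsum k = π.Tsum (k-1) + π.τ k := by
  unfold Tsum
  have h : k = (k-1) + 1 := by omega
  rw [h, Finset.sum_Icc_succ_top (by omega : 1 ≤ k - 1 + 1)]
  simp

variable {n : ℕ} {c R : ℕ → ℝ} {π : DLC}

lemma Tsum_pos (hv : π.Valid n c R) {k : ℕ} (h1 : 1 ≤ k) (hk : k ≤ π.K) : 0 < π.Tsum k := by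
  refine Finset.sum_pos (fun j hj => ?_) ⟨1, by simp; omega⟩
  simp only [Finset.mem_Icc] at hj
  exact (hv.2.1 j (by simp; omega)).2.1

lemma Tsum_mono (hv : π.Valid n c R) {k k' : ℕ} (h1 : 1 ≤ k) (hk : k ≤ k') (hk' : k' ≤ π.K) :
    π.Tsum k ≤ π.Tsum k' := by
  refine Finset.sum_le_sum_of_subset_of_nonneg (by simp [Finset.Icc_subset_Icc_right, hk]) ?_
  intro j hj _
  simp only [Finset.mem_Icc] at hj
  exact le_of_lt (hv.2.1 j (by simp; omega)).2.1

lemma Tsum_lt (hv : π.Valid n c R) {k : ℕ} (h2 : 2 ≤ k) (hk : k ≤ π.K) :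
    π.Tsum 1 < π.Tsum k := by
  have h := Tsum_mono hv (le_refl 1) (by omega : 1 ≤ k - 1) (by omega : k - 1 ≤ π.K)
  have := Tsum_succ π (by omega : 1 ≤ k)
  have hτ := (hv.2.1 k (by simp; omega)).2.1
  linarith

lemma Asum_ff (hff : π.FreeFall) {k : ℕ} (h1 : 1 ≤ k) (hk : k ≤ π.K) :
    π.Asum k = π.α 1 * π.τ 1 := by
  unfold Asum
  rw [Finset.sum_eq_single_of_mem 1 (by simp; omega)]
  intro j hj hj1
  simp only [Finset.mem_Icc] at hj
  rw [hff j (by omega) (by omega)]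
  ring

end DLC

/- ---------- telescoping (second form) ---------- -/

lemma sum_tele' (h : ℕ → ℝ) {K : ℕ} (hK : 1 ≤ K) :
    ∑ k ∈ Icc 2 K, (h (k - 1) - h k) = h 1 - h K := by
  have := sum_tele (fun k => -(h k)) hK
  simp only [neg_sub_neg] at this
  linarith [this]

/- ---------- the canonical cumulative-reward function G ---------- -/

noncomputable def sfun (c R : ℕ → ℝ) (A : ℝ) (i l : ℕ) : ℝ :=
  if i ≤ l then 0 else A / indiff c R l

noncomputable def Gfun (c R : ℕ → ℝ) (A : ℝ) (i : ℕ) (t : ℝ) : ℝ :=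
  R 1 * (t - min t (sfun c R A i 1)) +
    ∑ l ∈ Icc 2 i, R l * (min t (sfun c R A i (l-1)) - min t (sfun c R A i l))

section Gsec
variable {n : ℕ} {c R : ℕ → ℝ} {A : ℝ} {i : ℕ}
  (hI : LinInstance n c R) (hA : 0 < A) (hi2 : 2 ≤ i) (hin : i ≤ n)
include hI hA hi2 hin

lemma sfun_pos {l : ℕ} (h1 : 1 ≤ l) (h2 : l < i) : 0 < sfun c R A i l := by
  rw [sfun, if_neg (by omega)]
  exact div_pos hA (indiff_pos hI h1 (by omega))

lemma sfun_nonneg {l : ℕ} (h1 : 1 ≤ l) : 0 ≤ sfun c R A i l := by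
  rcases Nat.lt_or_ge l i with h | h
  · exact le_of_lt (sfun_pos hI hA hi2 hin h1 h)
  · rw [sfun, if_pos (by omega)]

lemma sfun_anti {l l' : ℕ} (h1 : 1 ≤ l) (hll : l ≤ l') : sfun c R A i l' ≤ sfun c R A i l := by
  rcases Nat.lt_or_ge l' i with h' | h'
  · have h : l < i := by omega
    rw [sfun, if_neg (by omega), sfun, if_neg (by omega)]
    apply div_le_div_of_nonneg_left (le_of_lt hA) (indiff_pos hI h1 (by omega))
    exact indiff_mono hI h1 hll (by omega)
  · rw [sfun, if_pos (by omega)]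
    exact sfun_nonneg hI hA hi2 hin h1

lemma sfun_top : sfun c R A i i = 0 := by rw [sfun, if_pos le_rfl]

lemma Gfun_zero : Gfun c R A i 0 = 0 := by
  unfold Gfun
  have h0 : ∀ l, 1 ≤ l → min (0:ℝ) (sfun c R A i l) = 0 := fun l hl =>
    min_eq_left (sfun_nonneg hI hA hi2 hin hl)
  rw [h0 1 le_rfl]
  rw [Finset.sum_eq_zero (fun l hl => ?_)]
  · ring
  · simp only [Finset.mem_Icc] at hl
    rw [h0 (l-1) (by omega), h0 l (by omega)]
    ring

lemma Gfun_diff {t1 t2 : ℝ} :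
    Gfun c R A i t2 - Gfun c R A i t1 =
      R 1 * ((t2 - t1) - (min t2 (sfun c R A i 1) - min t1 (sfun c R A i 1))) +
      ∑ l ∈ Icc 2 i, R l * ((min t2 (sfun c R A i (l-1)) - min t1 (sfun c R A i (l-1)))
          - (min t2 (sfun c R A i l) - min t1 (sfun c R A i l))) := by
  unfold Gfun
  have h : ∀ l ∈ Icc 2 i,
      R l * ((min t2 (sfun c R A i (l-1)) - min t1 (sfun c R A i (l-1)))
          - (min t2 (sfun c R A i l) - min t1 (sfun c R A i l)))
      = R l * (min t2 (sfun c R A i (l-1)) - min t2 (sfun c R A i l))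
        - R l * (min t1 (sfun c R A i (l-1)) - min t1 (sfun c R A i l)) := fun l _ => by ring
  rw [Finset.sum_congr rfl h, Finset.sum_sub_distrib]
  ring

end Gsec

/- ---------- core summation lemmas ---------- -/

lemma core_ge (Rf : ℕ → ℝ) {i a : ℕ} (hi : 2 ≤ i) (ha1 : 1 ≤ a) (hai : a ≤ i)
    (m : ℕ → ℝ) (t1 t2 : ℝ)
    (hRmono : ∀ l, a ≤ l → l ≤ i → Rf a ≤ Rf l)
    (hmi : m i = 0)
    (hfull : ∀ l, 1 ≤ l → l < a → m l = t2 - t1)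
    (hfac : ∀ l, 2 ≤ l → l ≤ i → m l ≤ m (l-1))
    (hub : m 1 ≤ t2 - t1) :
    Rf a * (t2 - t1) ≤
      Rf 1 * ((t2 - t1) - m 1) + ∑ l ∈ Icc 2 i, Rf l * (m (l-1) - m l) := by
  have htel : ∑ l ∈ Icc 2 i, (m (l-1) - m l) = m 1 - m i := sum_tele' m (by omega)
  have hlhs : Rf a * (t2 - t1) =
      Rf a * ((t2 - t1) - m 1) + ∑ l ∈ Icc 2 i, Rf a * (m (l-1) - m l) := by
    rw [← Finset.mul_sum, htel, hmi]; ring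
  rw [hlhs]
  apply add_le_add
  · rcases Nat.lt_or_ge a 2 with h | h
    · have ha : a = 1 := by omega
      rw [ha]
    · have h1 : m 1 = t2 - t1 := hfull 1 le_rfl (by omega)
      rw [h1]
      simp
  · apply Finset.sum_le_sum
    intro l hl
    simp only [Finset.mem_Icc] at hl
    rcases Nat.lt_or_ge l a with hla | hla
    · rw [hfull (l-1) (by omega) (by omega), hfull l (by omega) (by omega)]
      simp
    · exact mul_le_mul_of_nonneg_right (hRmono l hla hl.2)
        (by linarith [hfac l hl.1 hl.2])

lemma core_eq (Rf : ℕ → ℝ) {i a : ℕ} (hi : 2 ≤ i) (ha1 : 1 ≤ a) (hai : a ≤ i)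
    (m : ℕ → ℝ) (t1 t2 : ℝ)
    (hzero : ∀ l, a ≤ l → l ≤ i → m l = 0)
    (hfull : ∀ l, 1 ≤ l → l < a → m l = t2 - t1) :
    Rf 1 * ((t2 - t1) - m 1) + ∑ l ∈ Icc 2 i, Rf l * (m (l-1) - m l)
      = Rf a * (t2 - t1) := by
  have hterm : ∀ l ∈ Icc 2 i, Rf l * (m (l-1) - m l)
      = if l = a then Rf a * (t2 - t1) else 0 := by
    intro l hl
    simp only [Finset.mem_Icc] at hl
    rcases Nat.lt_trichotomy l a with hla | hla | hla
    · rw [if_neg (by omega), hfull (l-1) (by omega) (by omega), hfull l (by omega) (by omega)]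
      ring
    · subst hla
      rw [if_pos rfl, hfull (l-1) (by omega) (by omega), hzero l le_rfl hl.2]
      ring
    · rw [if_neg (by omega), hzero (l-1) (by omega) (by omega), hzero l (by omega) hl.2]
      ring
  rw [Finset.sum_congr rfl hterm, Finset.sum_ite_eq' (Icc 2 i) a (fun _ => Rf a * (t2 - t1))]
  rcases Nat.lt_or_ge a 2 with h | h
  · have ha : a = 1 := by omega
    rw [if_neg (by simp; omega), ha, hzero 1 (by omega) (by omega)]
    ring
  · rw [if_pos (by simp; omega), hfull 1 le_rfl (by omega)]
    ring

/- ---------- G bounds ---------- -/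

section Gsec2
variable {n : ℕ} {c R : ℕ → ℝ} {A : ℝ} {i : ℕ}
  (hI : LinInstance n c R) (hA : 0 < A) (hi2 : 2 ≤ i) (hin : i ≤ n)
include hI hA hi2 hin

lemma GL1 {t1 t2 : ℝ} (h0 : 0 ≤ t1) (h12 : t1 ≤ t2) {a : ℕ} (ha1 : 1 ≤ a) (hai : a ≤ i)
    (hup : 2 ≤ a → t2 ≤ sfun c R A i (a-1)) :
    R a * (t2 - t1) ≤ Gfun c R A i t2 - Gfun c R A i t1 := by
  rw [Gfun_diff (hI := hI) (hA := hA) (hi2 := hi2) (hin := hin)]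
  refine core_ge R hi2 ha1 hai
    (fun l => min t2 (sfun c R A i l) - min t1 (sfun c R A i l)) t1 t2 ?_ ?_ ?_ ?_ ?_
  · exact fun l hal hli => R_mono hI ha1 hal (by omega)
  · rw [sfun_top (hI := hI) (hA := hA) (hi2 := hi2) (hin := hin),
      min_eq_right (le_trans h0 h12), min_eq_right h0]
    ring
  · intro l h1 hla
    refine min_diff_full h12 (le_trans (hup (by omega)) ?_)
    exact sfun_anti hI hA hi2 hin h1 (by omega)
  · intro l h2 hli
    exact min_diff_mono h12 (sfun_anti hI hA hi2 hin (by omega) (by omega))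
  · exact min_diff_le h12

lemma GL2 {t1 t2 : ℝ} (h0 : 0 ≤ t1) (h12 : t1 ≤ t2) {a : ℕ} (ha1 : 1 ≤ a) (hai : a ≤ i)
    (hup : 2 ≤ a → t2 ≤ sfun c R A i (a-1)) (hlo : sfun c R A i a ≤ t1) :
    Gfun c R A i t2 - Gfun c R A i t1 = R a * (t2 - t1) := by
  rw [Gfun_diff (hI := hI) (hA := hA) (hi2 := hi2) (hin := hin)]
  refine core_eq R hi2 ha1 hai
    (fun l => min t2 (sfun c R A i l) - min t1 (sfun c R A i l)) t1 t2 ?_ ?_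
  · intro l hal hli
    have hsl : sfun c R A i l ≤ t1 := le_trans (sfun_anti hI hA hi2 hin ha1 hal) hlo
    exact min_diff_zero hsl (le_trans hsl h12)
  · intro l h1 hla
    refine min_diff_full h12 (le_trans (hup (by omega)) ?_)
    exact sfun_anti hI hA hi2 hin h1 (by omega)

end Gsec2

/- ---------- sum split ---------- -/

lemma sum_split_first (f : ℕ → ℝ) {K : ℕ} (hK : 1 ≤ K) :
    ∑ k ∈ Icc 1 K, f k = f 1 + ∑ k ∈ Icc 2 K, f k := by
  have h : Icc 1 K = insert 1 (Icc 2 K) := by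
    ext x; simp [Finset.mem_Icc, Finset.mem_insert]; omega
  rw [h, Finset.sum_insert (by simp)]

/- ---------- the canonical candidate contract ---------- -/

noncomputable def cand (c R : ℕ → ℝ) (A : ℝ) (i m : ℕ) : DLC where
  K := i - m + 1
  α := fun k => if k = 1 then indiff c R (i-1) else 0
  τ := fun k => if k = 1 then A / indiff c R (i-1)
       else A / indiff c R (i-k) - A / indiff c R (i-k+1)
  a := fun k => i - k + 1

section Cand
variable {n : ℕ} {c R : ℕ → ℝ} {A : ℝ} {i m : ℕ}
  (hI : LinInstance n c R) (hA : 0 < A) (h2m : 2 ≤ m) (hmi : m ≤ i) (hin : i ≤ n)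
include hI hA h2m hmi hin

lemma cand_ff : (cand c R A i m).FreeFall := by
  intro k h2 hk
  simp only [cand]
  rw [if_neg (by omega)]

lemma cand_Tsum {k : ℕ} (h1 : 1 ≤ k) (hk : k ≤ i - m + 1) :
    (cand c R A i m).Tsum k = A / indiff c R (i-k) := by
  induction k with
  | zero => omega
  | succ k ih =>
      rcases Nat.lt_or_ge k 1 with h | h
      · have : k = 0 := by omega
        subst this
        simp [DLC.Tsum, cand]
      · rw [DLC.Tsum_succ _ (by omega)]
        have hk1 : k + 1 - 1 = k := rfl
        rw [hk1, ih h (by omega)]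
        have hne : k + 1 ≠ 1 := by omega
        simp only [cand, hne, if_false]
        have harith : i - (k+1) + 1 = i - k := by omega
        rw [harith]
        ring

lemma cand_avg {k : ℕ} (h1 : 1 ≤ k) (hk : k ≤ i - m + 1) :
    (cand c R A i m).avg k = indiff c R (i-k) := by
  have hpos : 0 < indiff c R (i-k) := indiff_pos hI (by omega) (by omega)
  have hAsum : (cand c R A i m).Asum k = A := by
    rw [DLC.Asum_ff (cand_ff hI hA h2m hmi hin) h1 (by simpa [cand] using hk)]
    have hpos1 : 0 < indiff c R (i-1) := indiff_pos hI (by omega) (by omega)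
    simp only [cand, if_pos rfl, ↓reduceIte]
    field_simp
  rw [DLC.avg, hAsum, cand_Tsum hI hA h2m hmi hin h1 hk]
  field_simp

lemma cand_valid : (cand c R A i m).Valid n c R := by
  have hKeq : (cand c R A i m).K = i - m + 1 := rfl
  refine ⟨by omega, ?_, ?_, ?_⟩
  · intro k hk
    simp only [Finset.mem_Icc, hKeq] at hk
    refine ⟨?_, ?_, ?_⟩
    · simp only [cand]
      split_ifs
      · exact le_of_lt (indiff_pos hI (by omega) (by omega))
      · exact le_rfl
    · simp only [cand]
      split_ifs
      · exact div_pos hA (indiff_pos hI (by omega) (by omega))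
      · have hk2 : 2 ≤ k := by omega
        have hlt : indiff c R (i-k) < indiff c R (i-k+1) := by
          have := hI.2.2.2.2.2.2.1 (i-k) (by omega) (by omega)
          rwa [show i - k + 1 = i - k + 1 from rfl] at this
        have h1 : 0 < indiff c R (i-k) := indiff_pos hI (by omega) (by omega)
        have := div_lt_div_of_pos_left hA h1 hlt
        linarith
    · simp only [cand, Finset.mem_Icc]
      omega
  · intro k hk
    simp only [Finset.mem_Icc, hKeq] at hk
    rw [cand_avg hI hA h2m hmi hin hk.1 hk.2]
    have ha : (cand c R A i m).a k = i - k + 1 := rfl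
    rw [ha]
    refine mem_BR hI (by omega) (by omega) _ (fun h2 => ?_) (fun hn => ?_)
    · rw [show i - k + 1 - 1 = i - k from rfl]
    · exact le_of_lt (hI.2.2.2.2.2.2.1 (i-k) (by omega) (by omega))
  · intro k h2 hk
    rw [hKeq] at hk
    rw [cand_avg hI hA h2m hmi hin (by omega) (by omega)]
    have ha : (cand c R A i m).a k = i - k + 1 := rfl
    rw [ha, show i - (k-1) = i - k + 1 from by omega]
    refine mem_BR hI (by omega) (by omega) _ (fun hh2 => ?_) (fun hn => ?_)
    · rw [show i - k + 1 - 1 = i - k from rfl]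
      exact le_of_lt (hI.2.2.2.2.2.2.1 (i-k) (by omega) (by omega))
    · exact le_rfl

lemma cand_util : (cand c R A i m).Util R =
    (Gfun c R A i (sfun c R A i (m-1)) - A * R i) / sfun c R A i (m-1) := by
  have hKeq : (cand c R A i m).K = i - m + 1 := rfl
  have hsm : sfun c R A i (m-1) = A / indiff c R (m-1) := by
    rw [sfun, if_neg (by omega)]
  have hTs : (cand c R A i m).Tsum ((cand c R A i m).K) = sfun c R A i (m-1) := by
    rw [hKeq, cand_Tsum hI hA h2m hmi hin (by omega) le_rfl,
      show i - (i - m + 1) = m - 1 from by omega, hsm]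
  rw [DLC.Util, hTs, hKeq]
  congr 1
  -- numerator
  rw [sum_split_first _ (by omega : 1 ≤ i - m + 1)]
  have hfirst : (cand c R A i m).τ 1 * (1 - (cand c R A i m).α 1) * R ((cand c R A i m).a 1)
      = R i * sfun c R A i (i-1) - A * R i := by
    have hpos1 : 0 < indiff c R (i-1) := indiff_pos hI (by omega) (by omega)
    have ha1 : (cand c R A i m).a 1 = i := by
      simp only [cand]; omega
    rw [ha1]
    simp only [cand, if_pos rfl, sfun, if_neg (by omega : ¬ i ≤ i - 1), ↓reduceIte]
    field_simp
  rw [hfirst]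
  have hterm : ∀ k ∈ Icc 2 (i-m+1),
      (cand c R A i m).τ k * (1 - (cand c R A i m).α k) * R ((cand c R A i m).a k)
      = Gfun c R A i (sfun c R A i (i-k)) - Gfun c R A i (sfun c R A i (i-k+1)) := by
    intro k hk
    simp only [Finset.mem_Icc] at hk
    have h1k : 1 ≤ i - k := by omega
    have hik1 : i - k + 1 < i := by omega
    have ht1 : sfun c R A i (i-k+1) = A / indiff c R (i-k+1) := by
      rw [sfun, if_neg (by omega)]
    have ht2 : sfun c R A i (i-k) = A / indiff c R (i-k) := by
      rw [sfun, if_neg (by omega)]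
    have hGL := GL2 hI hA (by omega : 2 ≤ i) hin
      (t1 := sfun c R A i (i-k+1)) (t2 := sfun c R A i (i-k))
      (a := i - k + 1) (by exact sfun_nonneg hI hA (by omega) hin (by omega))
      (sfun_anti hI hA (by omega) hin h1k (by omega))
      (by omega) (by omega)
      (fun _ => by rw [show i - k + 1 - 1 = i - k from rfl])
      (le_rfl)
    rw [hGL]
    have ha : (cand c R A i m).a k = i - k + 1 := rfl
    simp only [cand, if_neg (by omega : ¬ k = 1)]
    rw [ht1, ht2]
    ring
  rw [Finset.sum_congr rfl hterm]
  have htel : ∑ k ∈ Icc 2 (i-m+1),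
      (Gfun c R A i (sfun c R A i (i-k)) - Gfun c R A i (sfun c R A i (i-k+1)))
      = Gfun c R A i (sfun c R A i (m-1)) - Gfun c R A i (sfun c R A i (i-1)) := by
    have := sum_tele (fun k => Gfun c R A i (sfun c R A i (i-k))) (by omega : 1 ≤ i - m + 1)
    rw [show i - (i - m + 1) = m - 1 from by omega] at this
    rw [← this]
    refine Finset.sum_congr rfl (fun k hk => ?_)
    simp only [Finset.mem_Icc] at hk
    rw [show i - (k - 1) = i - k + 1 from by omega]
  rw [htel]
  have hGtop : Gfun c R A i (sfun c R A i (i-1)) = R i * sfun c R A i (i-1) := by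
    have hGL := GL2 hI hA (by omega : 2 ≤ i) hin (t1 := (0:ℝ)) (t2 := sfun c R A i (i-1))
      (a := i) le_rfl (sfun_nonneg hI hA (by omega) hin (by omega)) (by omega) le_rfl
      (fun _ => le_rfl) (by rw [sfun_top (hI := hI) (hA := hA) (hi2 := by omega) (hin := hin)])
    rw [Gfun_zero hI hA (by omega) hin] at hGL
    linarith [hGL]
  rw [hGtop]
  ring
end Cand

/- ---------- telescope over Icc 1 K ---------- -/

lemma sum_tele1 (h : ℕ → ℝ) (K : ℕ) :
    ∑ k ∈ Icc 1 K, (h k - h (k - 1)) = h K - h 0 := by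
  induction K with
  | zero => simp
  | succ K ih =>
      rw [Finset.sum_Icc_succ_top (by omega : 1 ≤ K + 1), ih]
      have h2 : K + 1 - 1 = K := rfl
      rw [h2]
      ring

/- ---------- the trivial contract ---------- -/

noncomputable def triv : DLC := ⟨1, fun _ => 0, fun _ => 1, fun _ => 1⟩

section Triv
variable {n : ℕ} {c R : ℕ → ℝ} (hI : LinInstance n c R)
include hI

lemma triv_Tsum : triv.Tsum 1 = 1 := by simp [DLC.Tsum, triv]

lemma triv_avg : triv.avg 1 = 0 := by simp [DLC.avg, DLC.Asum, triv]

lemma triv_valid : triv.Valid n c R := by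
  have hKt : triv.K = 1 := rfl
  refine ⟨le_rfl, ?_, ?_, ?_⟩
  · intro k hk
    rw [hKt] at hk
    simp only [Finset.mem_Icc] at hk
    have hk1 : k = 1 := by omega
    subst hk1
    refine ⟨le_rfl, one_pos, ?_⟩
    simp only [triv, Finset.mem_Icc]
    exact ⟨le_rfl, by have := hI.1; omega⟩
  · intro k hk
    rw [hKt] at hk
    simp only [Finset.mem_Icc] at hk
    have hk1 : k = 1 := by omega
    subst hk1
    rw [show (triv.a 1) = 1 from rfl, triv_avg hI]
    exact mem_BR hI le_rfl (by have := hI.1; omega) 0 (fun h => absurd h (by omega))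
      (fun _ => le_of_lt (indiff_pos hI le_rfl (by have := hI.1; omega)))
  · intro k h2 hk
    rw [hKt] at hk
    omega

lemma triv_util : triv.Util R = R 1 := by
  simp [DLC.Util, DLC.Tsum, triv]

end Triv


/-- Every valid free-fall dynamic linear contract is dominated
by a valid free-fall contract that starts at an indifference point
(`α'^1 = α_{i-1,i}`, `a'^1 = i`) and whose final time-averaged contract ends at
an indifference point `α_{j-1,j}` with `j ≤ i` (where `α_{0,1} := 0`). -/
theorem free_fall_endpoints_at_indifference (n : ℕ) (c R : ℕ → ℝ)
    (hInst : LinInstance n c R) (π : DLC) (hπ : π.Valid n c R) (hff : π.FreeFall) :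
    ∃ π' : DLC, π'.Valid n c R ∧ π'.FreeFall ∧ π'.Util R ≥ π.Util R ∧
      ∃ i, 1 ≤ i ∧ i ≤ n ∧ π'.α 1 = bp c R (i - 1) ∧ π'.a 1 = i ∧
        ∃ j, 1 ≤ j ∧ j ≤ i ∧ π'.avg π'.K = bp c R (j - 1) := by
  have hn2 : 2 ≤ n := hInst.1
  have hK1 : 1 ≤ π.K := hπ.1
  have h1K : (1:ℕ) ∈ Icc 1 π.K := by simp [hK1]
  have hτ1 : 0 < π.τ 1 := (hπ.2.1 1 h1K).2.1
  have hα1 : 0 ≤ π.α 1 := (hπ.2.1 1 h1K).1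
  have hT1 : π.Tsum 1 = π.τ 1 := by simp [DLC.Tsum]
  have havg1 : π.avg 1 = π.α 1 := by
    have hA1 : π.Asum 1 = π.α 1 * π.τ 1 := by simp [DLC.Asum]
    rw [DLC.avg, hT1, hA1]
    field_simp
  have hBR1 : π.a 1 ∈ BR n c R (π.α 1) := by
    have := hπ.2.2.1 1 h1K; rwa [havg1] at this
  have hTpos : 0 < π.Tsum π.K := DLC.Tsum_pos hπ hK1 le_rfl
  by_cases hzero : π.α 1 = 0
  · have ha1 : π.a 1 = 1 := BR_zero hInst (by rwa [hzero] at hBR1)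
    refine ⟨π, hπ, hff, le_refl _, 1, le_rfl, by omega, by simp [bp, hzero], ha1,
      1, le_rfl, le_rfl, ?_⟩
    have hAs : π.Asum π.K = 0 := by rw [DLC.Asum_ff hff hK1 le_rfl, hzero]; ring
    simp [DLC.avg, hAs, bp]
  · have hαpos : 0 < π.α 1 := lt_of_le_of_ne hα1 (Ne.symm hzero)
    have hain : π.a 1 ∈ Finset.Icc 1 n := (hπ.2.1 1 h1K).2.2
    have hi1 : 1 ≤ π.a 1 := (Finset.mem_Icc.mp hain).1
    have hin : π.a 1 ≤ n := (Finset.mem_Icc.mp hain).2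
    by_cases hione : π.a 1 = 1
    · -- all actions are 1; trivial contract dominates
      have hup1 : π.α 1 ≤ indiff c R 1 := BR_upper_s19 hInst le_rfl (by omega)
        (by rwa [hione] at hBR1)
      have hAk : ∀ k, 1 ≤ k → k ≤ π.K → π.a k = 1 := by
        intro k h1 hk
        rcases Nat.lt_or_ge k 2 with h | h
        · have hk1 : k = 1 := by omega
          rw [hk1, hione]
        · by_contra hne
          have hkm : k ∈ Icc 1 π.K := by simp; omega
          have hBRk := hπ.2.2.1 k hkm
          have hakm := (Finset.mem_Icc.mp (hπ.2.1 k hkm).2.2)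
          have hak2 : 2 ≤ π.a k := by omega
          have hlowk := BR_lower_s19 hInst hak2 hakm.2 hBRk
          have havgk : π.avg k = (π.α 1 * π.τ 1) / π.Tsum k := by
            rw [DLC.avg, DLC.Asum_ff hff (by omega) hk]
          have hTk : π.Tsum 1 < π.Tsum k := DLC.Tsum_lt hπ h hk
          have hT1p : 0 < π.Tsum 1 := by rw [hT1]; exact hτ1
          have hlt : π.avg k < π.α 1 := by
            rw [havgk]
            have hd : (π.α 1 * π.τ 1) / π.Tsum k < (π.α 1 * π.τ 1) / π.Tsum 1 :=
              div_lt_div_of_pos_left (mul_pos hαpos hτ1) hT1p hTk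
            rw [hT1] at hd
            calc (π.α 1 * π.τ 1) / π.Tsum k < (π.α 1 * π.τ 1) / π.τ 1 := hd
              _ = π.α 1 := by field_simp
          have hmono : indiff c R 1 ≤ indiff c R (π.a k - 1) :=
            indiff_mono hInst le_rfl (by omega) (by omega)
          linarith
      refine ⟨triv, triv_valid hInst,
        (by intro k h2 hk; rw [show triv.K = 1 from rfl] at hk; omega), ?_,
        1, le_rfl, by omega, by simp [bp, triv], rfl, 1, le_rfl, le_rfl,
        by rw [show triv.K = 1 from rfl, triv_avg hInst]; simp [bp]⟩
      rw [triv_util hInst, ge_iff_le, DLC.Util, div_le_iff₀ hTpos]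
      have hbd : ∀ k ∈ Icc 1 π.K, π.τ k * (1 - π.α k) * R (π.a k) ≤ π.τ k * R 1 := by
        intro k hk
        simp only [Finset.mem_Icc] at hk
        rw [hAk k hk.1 hk.2]
        have hτk : 0 < π.τ k := (hπ.2.1 k (by simp; omega)).2.1
        have hαk : 0 ≤ π.α k := (hπ.2.1 k (by simp; omega)).1
        nlinarith [mul_nonneg (mul_nonneg hτk.le hαk) hInst.2.2.1]
      calc ∑ k ∈ Icc 1 π.K, π.τ k * (1 - π.α k) * R (π.a k)
          ≤ ∑ k ∈ Icc 1 π.K, π.τ k * R 1 := Finset.sum_le_sum hbd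
        _ = R 1 * π.Tsum π.K := by rw [← Finset.sum_mul, DLC.Tsum]; ring
    · -- main case : i = π.a 1 ≥ 2
      set i := π.a 1 with hidef
      have hi2 : 2 ≤ i := by omega
      set A := π.α 1 * π.τ 1 with hAdef
      have hA : 0 < A := mul_pos hαpos hτ1
      have hlow : indiff c R (i-1) ≤ π.α 1 := BR_lower_s19 hInst hi2 hin hBR1
      set T := π.Tsum π.K with hTdef
      have hAd1 : A / π.τ 1 = π.α 1 := by rw [hAdef]; field_simp
      have havgk : ∀ k, 1 ≤ k → k ≤ π.K → π.avg k = A / π.Tsum k := fun k h1 hk => by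
        rw [DLC.avg, DLC.Asum_ff hff h1 hk]
      have havglt : ∀ k, 2 ≤ k → k ≤ π.K → π.avg k < π.α 1 := by
        intro k h2 hk
        rw [havgk k (by omega) hk]
        have hT1p : 0 < π.Tsum 1 := by rw [hT1]; exact hτ1
        have hd : A / π.Tsum k < A / π.Tsum 1 :=
          div_lt_div_of_pos_left hA hT1p (DLC.Tsum_lt hπ h2 hk)
        rw [hT1, hAd1] at hd
        exact hd
      have hak_le : ∀ k, 1 ≤ k → k ≤ π.K → π.a k ≤ i := by
        intro k h1 hk
        rcases Nat.lt_or_ge k 2 with h | h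
        · have hk1 : k = 1 := by omega
          rw [hk1]
        · by_contra hgt
          push_neg at hgt
          have hkm : k ∈ Icc 1 π.K := by simp; omega
          have hakm := Finset.mem_Icc.mp (hπ.2.1 k hkm).2.2
          have hBRk := hπ.2.2.1 k hkm
          have hlowk := BR_lower_s19 hInst (by omega) hakm.2 hBRk
          have hupi : π.α 1 ≤ indiff c R i := BR_upper_s19 hInst (by omega) (by omega) hBR1
          have hmono2 : indiff c R i ≤ indiff c R (π.a k - 1) :=
            indiff_mono hInst (by omega) (by omega) (by omega)
          have := havglt k h hk
          linarith
      have hsfga : ∀ k, 1 ≤ k → k ≤ π.K → 2 ≤ π.a k →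
          π.Tsum k ≤ sfun c R A i (π.a k - 1) := by
        intro k h1 hk h2a
        have hkm : k ∈ Icc 1 π.K := by simp; omega
        have hakm := Finset.mem_Icc.mp (hπ.2.1 k hkm).2.2
        have hBRk := hπ.2.2.1 k hkm
        have hlowk := BR_lower_s19 hInst h2a hakm.2 hBRk
        rw [havgk k h1 hk] at hlowk
        have hTkp : 0 < π.Tsum k := DLC.Tsum_pos hπ h1 hk
        have hle : π.a k ≤ i := hak_le k h1 hk
        have hip : 0 < indiff c R (π.a k - 1) := indiff_pos hInst (by omega) (by omega)
        rw [sfun, if_neg (by omega : ¬ i ≤ π.a k - 1), le_div_iff₀ hip]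
        rw [le_div_iff₀ hTkp] at hlowk
        linarith
      have hNum : ∑ k ∈ Icc 1 π.K, π.τ k * (1 - π.α k) * R (π.a k)
          ≤ Gfun c R A i T - A * R i := by
        have hsplit : ∀ k ∈ Icc 1 π.K, π.τ k * (1 - π.α k) * R (π.a k)
            = π.τ k * R (π.a k) - π.α k * π.τ k * R (π.a k) := fun k _ => by ring
        rw [Finset.sum_congr rfl hsplit, Finset.sum_sub_distrib]
        have hsecond : ∑ k ∈ Icc 1 π.K, π.α k * π.τ k * R (π.a k) = A * R i := by
          have hz : ∀ j ∈ Icc 1 π.K, j ≠ 1 → π.α j * π.τ j * R (π.a j) = 0 := by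
            intro j hj hj1
            simp only [Finset.mem_Icc] at hj
            rw [hff j (by omega) hj.2]
            ring
          rw [Finset.sum_eq_single_of_mem 1 h1K hz, hAdef, hidef]
        rw [hsecond]
        have hfirst : ∑ k ∈ Icc 1 π.K, π.τ k * R (π.a k) ≤ Gfun c R A i T := by
          have hstep : ∀ k ∈ Icc 1 π.K, π.τ k * R (π.a k)
              ≤ Gfun c R A i (π.Tsum k) - Gfun c R A i (π.Tsum (k-1)) := by
            intro k hkm
            simp only [Finset.mem_Icc] at hkm
            have hTk : π.Tsum k = π.Tsum (k-1) + π.τ k := DLC.Tsum_succ π hkm.1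
            have hτk : 0 < π.τ k := (hπ.2.1 k (by simp; omega)).2.1
            have hT0 : 0 ≤ π.Tsum (k-1) := by
              rcases Nat.lt_or_ge k 2 with h | h
              · rw [show k - 1 = 0 from by omega, DLC.Tsum_zero]
              · exact le_of_lt (DLC.Tsum_pos hπ (by omega) (by omega))
            have hak1 : 1 ≤ π.a k :=
              (Finset.mem_Icc.mp (hπ.2.1 k (by simp; omega)).2.2).1
            have hGL := GL1 hInst hA hi2 hin (t1 := π.Tsum (k-1)) (t2 := π.Tsum k)
              hT0 (by linarith) (a := π.a k) hak1 (hak_le k hkm.1 hkm.2)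
              (fun h2a => hsfga k hkm.1 hkm.2 h2a)
            calc π.τ k * R (π.a k) = R (π.a k) * (π.Tsum k - π.Tsum (k-1)) := by
                  rw [hTk]; ring
              _ ≤ _ := hGL
          calc ∑ k ∈ Icc 1 π.K, π.τ k * R (π.a k)
              ≤ ∑ k ∈ Icc 1 π.K, (Gfun c R A i (π.Tsum k) - Gfun c R A i (π.Tsum (k-1))) :=
                Finset.sum_le_sum hstep
            _ = Gfun c R A i (π.Tsum π.K) - Gfun c R A i (π.Tsum 0) :=
                sum_tele1 (fun k => Gfun c R A i (π.Tsum k)) π.K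
            _ = Gfun c R A i T := by
                rw [DLC.Tsum_zero, Gfun_zero hInst hA hi2 hin, ← hTdef]
                ring
        linarith
      have hUtil_le : π.Util R ≤ (Gfun c R A i T - A * R i) / T := by
        rw [DLC.Util, ← hTdef]
        exact (div_le_div_iff_of_pos_right hTpos).mpr hNum
      -- region selection
      have hS1 : (1:ℕ) ∈ (Icc 1 i).filter (fun l => l = 1 ∨ T ≤ sfun c R A i (l-1)) := by
        simp only [Finset.mem_filter, Finset.mem_Icc]
        exact ⟨⟨le_rfl, by omega⟩, Or.inl (by simp)⟩
      set S := (Icc 1 i).filter (fun l => l = 1 ∨ T ≤ sfun c R A i (l-1)) with hSdef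
      set astar := S.max' ⟨1, hS1⟩ with hastar
      have hamem : astar ∈ S := Finset.max'_mem S _
      have hamem' := Finset.mem_filter.mp hamem
      have ha_lo : 1 ≤ astar := (Finset.mem_Icc.mp hamem'.1).1
      have ha_hi : astar ≤ i := (Finset.mem_Icc.mp hamem'.1).2
      have haup : 2 ≤ astar → T ≤ sfun c R A i (astar - 1) := by
        intro h2
        rcases hamem'.2 with h | h
        · omega
        · exact h
      have hanext : astar < i → sfun c R A i astar < T := by
        intro hlt
        by_contra hc
        push_neg at hc
        have hmem2 : astar + 1 ∈ S := by
          simp only [hSdef, Finset.mem_filter, Finset.mem_Icc]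
          refine ⟨⟨by omega, by omega⟩, Or.inr ?_⟩
          rw [show astar + 1 - 1 = astar from rfl]
          exact hc
        have := Finset.le_max' S (astar+1) hmem2
        omega
      rcases Nat.lt_or_ge astar 2 with ha1c | ha2c
      · -- astar = 1
        have haeq : astar = 1 := by omega
        have hs1T : sfun c R A i 1 < T := by
          have := hanext (by omega)
          rwa [haeq] at this
        have hs1p : 0 < sfun c R A i 1 := sfun_pos hInst hA hi2 hin le_rfl (by omega)
        have hGL := GL2 hInst hA hi2 hin (t1 := sfun c R A i 1) (t2 := T)
          (le_of_lt hs1p) (le_of_lt hs1T) (a := 1) le_rfl (by omega)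
          (fun h => absurd h (by omega)) le_rfl
        set D := Gfun c R A i (sfun c R A i 1) - A * R i - R 1 * sfun c R A i 1 with hD
        have hGT : Gfun c R A i T - A * R i = R 1 * T + D := by
          rw [hD]; linarith [hGL]
        by_cases hDn : D ≤ 0
        · refine ⟨triv, triv_valid hInst,
            (by intro k h2 hk; rw [show triv.K = 1 from rfl] at hk; omega), ?_,
            1, le_rfl, by omega, by simp [bp, triv], rfl, 1, le_rfl, le_rfl,
            by rw [show triv.K = 1 from rfl, triv_avg hInst]; simp [bp]⟩
          rw [triv_util hInst, ge_iff_le]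
          have hW : (Gfun c R A i T - A * R i) / T ≤ R 1 := by
            rw [hGT, add_div]
            have e1 : R 1 * T / T = R 1 := by field_simp
            have e2 : D / T ≤ 0 := by
              rw [div_nonpos_iff]
              right
              exact ⟨hDn, le_of_lt hTpos⟩
            linarith
          linarith [hUtil_le]
        · push_neg at hDn
          have hchain : (Gfun c R A i T - A * R i) / T
              ≤ (Gfun c R A i (sfun c R A i 1) - A * R i) / (sfun c R A i 1) := by
            rw [hGT]
            have hg : Gfun c R A i (sfun c R A i 1) - A * R i = R 1 * sfun c R A i 1 + D := by
              rw [hD]; ring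
            rw [hg, add_div, add_div]
            have e1 : R 1 * T / T = R 1 := by field_simp
            have e2 : R 1 * sfun c R A i 1 / sfun c R A i 1 = R 1 := by field_simp
            have e3 : D / T ≤ D / sfun c R A i 1 :=
              div_le_div_of_nonneg_left (le_of_lt hDn) hs1p (le_of_lt hs1T)
            rw [e1, e2]
            linarith
          have hcu := cand_util hInst hA (le_rfl : 2 ≤ 2) hi2 hin
          rw [show (2:ℕ) - 1 = 1 from rfl] at hcu
          refine ⟨cand c R A i 2, cand_valid hInst hA le_rfl hi2 hin,
            cand_ff hInst hA le_rfl hi2 hin, ?_, i, by omega, hin, ?_, ?_, 2, by omega, hi2, ?_⟩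
          · rw [hcu, ge_iff_le]
            exact le_trans hUtil_le hchain
          · show (if (1:ℕ) = 1 then indiff c R (i-1) else 0) = bp c R (i-1)
            rw [if_pos rfl, bp, if_neg (by omega)]
          · show i - 1 + 1 = i
            omega
          · rw [show (cand c R A i 2).K = i - 2 + 1 from rfl,
              cand_avg hInst hA le_rfl hi2 hin (by omega) le_rfl,
              show i - (i - 2 + 1) = 1 from by omega, bp, if_neg (by omega)]
      · -- astar ≥ 2
        have hTub : T ≤ sfun c R A i (astar - 1) := haup ha2c
        have hspa1 : 0 < sfun c R A i (astar - 1) :=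
          sfun_pos hInst hA hi2 hin (by omega) (by omega)
        have hlo2 : sfun c R A i astar ≤ T := by
          rcases Nat.lt_or_ge astar i with hlt | hge
          · exact le_of_lt (hanext hlt)
          · have hEq : astar = i := by omega
            rw [hEq, sfun_top (hI := hInst) (hA := hA) (hi2 := hi2) (hin := hin)]
            exact le_of_lt hTpos
        have hGL := GL2 hInst hA hi2 hin (t1 := T) (t2 := sfun c R A i (astar - 1))
          (le_of_lt hTpos) hTub (a := astar) (by omega) ha_hi (fun _ => le_rfl) hlo2
        set D := Gfun c R A i (sfun c R A i (astar - 1)) - A * R i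
          - R astar * sfun c R A i (astar - 1) with hD
        have hGT : Gfun c R A i T - A * R i = R astar * T + D := by
          rw [hD]; linarith [hGL]
        by_cases hDn : D ≤ 0
        · -- candidate cand c R A i astar
          have hchain : (Gfun c R A i T - A * R i) / T
              ≤ (Gfun c R A i (sfun c R A i (astar - 1)) - A * R i) / (sfun c R A i (astar - 1)) := by
            rw [hGT]
            have hg : Gfun c R A i (sfun c R A i (astar - 1)) - A * R i
                = R astar * sfun c R A i (astar - 1) + D := by rw [hD]; ring
            rw [hg, add_div, add_div]
            have e1 : R astar * T / T = R astar := by field_simp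
            have e2 : R astar * sfun c R A i (astar - 1) / sfun c R A i (astar - 1) = R astar := by
              field_simp
            have e3 : D / T ≤ D / sfun c R A i (astar - 1) := by
              rw [div_eq_mul_inv, div_eq_mul_inv]
              have hinv : (sfun c R A i (astar - 1))⁻¹ ≤ T⁻¹ :=
                one_div T ▸ (by
                  have := one_div_le_one_div_of_le hTpos hTub
                  simpa [one_div] using this)
              exact mul_le_mul_of_nonpos_left hinv hDn
            rw [e1, e2]
            linarith
          have hcu := cand_util hInst hA ha2c ha_hi hin
          refine ⟨cand c R A i astar, cand_valid hInst hA ha2c ha_hi hin,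
            cand_ff hInst hA ha2c ha_hi hin, ?_, i, by omega, hin, ?_, ?_,
            astar, by omega, ha_hi, ?_⟩
          · rw [hcu, ge_iff_le]
            exact le_trans hUtil_le hchain
          · show (if (1:ℕ) = 1 then indiff c R (i-1) else 0) = bp c R (i-1)
            rw [if_pos rfl, bp, if_neg (by omega)]
          · show i - 1 + 1 = i
            omega
          · rw [show (cand c R A i astar).K = i - astar + 1 from rfl,
              cand_avg hInst hA ha2c ha_hi hin (by omega) le_rfl,
              show i - (i - astar + 1) = astar - 1 from by omega, bp, if_neg (by omega)]
        · push_neg at hDn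
          have hai_lt : astar < i := by
            rcases Nat.lt_or_ge astar i with h | h
            · exact h
            · exfalso
              have hEq : astar = i := by omega
              have hGtop : Gfun c R A i (sfun c R A i (i-1)) = R i * sfun c R A i (i-1) := by
                have hGL2 := GL2 hInst hA hi2 hin (t1 := (0:ℝ)) (t2 := sfun c R A i (i-1))
                  le_rfl (sfun_nonneg hInst hA hi2 hin (by omega)) (a := i) (by omega) le_rfl
                  (fun _ => le_rfl)
                  (by rw [sfun_top (hI := hInst) (hA := hA) (hi2 := hi2) (hin := hin)])
                rw [Gfun_zero hInst hA hi2 hin] at hGL2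
                linarith [hGL2]
              rw [hD, hEq, hGtop] at hDn
              have hRi : 0 ≤ R i := R_nonneg hInst (by omega) hin
              nlinarith
          have hsap : 0 < sfun c R A i astar :=
            sfun_pos hInst hA hi2 hin (by omega) hai_lt
          have hGL2b := GL2 hInst hA hi2 hin (t1 := sfun c R A i astar)
            (t2 := sfun c R A i (astar - 1)) (le_of_lt hsap)
            (sfun_anti hInst hA hi2 hin (by omega) (by omega)) (a := astar) (by omega) ha_hi
            (fun _ => le_rfl) le_rfl
          have hg2 : Gfun c R A i (sfun c R A i astar) - A * R i
              = R astar * sfun c R A i astar + D := by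
            rw [hD]; linarith [hGL2b]
          have hchain : (Gfun c R A i T - A * R i) / T
              ≤ (Gfun c R A i (sfun c R A i astar) - A * R i) / (sfun c R A i astar) := by
            rw [hGT, hg2, add_div, add_div]
            have e1 : R astar * T / T = R astar := by field_simp
            have e2 : R astar * sfun c R A i astar / sfun c R A i astar = R astar := by
              field_simp
            have e3 : D / T ≤ D / sfun c R A i astar :=
              div_le_div_of_nonneg_left (le_of_lt hDn) hsap hlo2
            rw [e1, e2]
            linarith
          have hcu := cand_util hInst hA (by omega : 2 ≤ astar + 1) (by omega : astar + 1 ≤ i) hin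
          rw [show astar + 1 - 1 = astar from rfl] at hcu
          refine ⟨cand c R A i (astar + 1), cand_valid hInst hA (by omega) (by omega) hin,
            cand_ff hInst hA (by omega) (by omega) hin, ?_, i, by omega, hin, ?_, ?_,
            astar + 1, by omega, by omega, ?_⟩
          · rw [hcu, ge_iff_le]
            exact le_trans hUtil_le hchain
          · show (if (1:ℕ) = 1 then indiff c R (i-1) else 0) = bp c R (i-1)
            rw [if_pos rfl, bp, if_neg (by omega)]
          · show i - 1 + 1 = i
            omega
          · rw [show (cand c R A i (astar+1)).K = i - (astar+1) + 1 from rfl,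
              cand_avg hInst hA (by omega) (by omega) hin (by omega) le_rfl,
              show i - (i - (astar+1) + 1) = astar from by omega, bp,
              show astar + 1 - 1 = astar from rfl, if_neg (by omega)]
end
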